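/- arXiv:1004.2582 — 5 statements merged into one kernel-verified Lean document; each statement's English description precedes it below -/
import Mathlib

section
/- Let a group H act on a tree T without inversions. Let A and B be subgroups of H such that the fixed-point sets T^A and T^B are both non-empty. If A and B commute elementwise (i.e. [A,B]=1), then T^A ∩ T^B is non-empty. -/
open SimpleGraph

private lemma listMapFix {α : Type*} {f : α → α} :
    ∀ {l : List α}, l.map f = l → ∀ x ∈ l, f x = x := by
  intro l
  induction l with
  | nil => simp
  | cons a l ih =>
    intro h x hx
    rw [List.map_cons, List.cons.injEq] at h
    rcases List.mem_cons.mp hx with rfl | hx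
    · exact h.1
    · exact ih h.2 x hx

section TreeLemmas

variable {V : Type*} {T : SimpleGraph V}

/-- A geodesic path exists between any two vertices. -/
private lemma existsGeodesic (hconn : T.Connected) (v x : V) :
    ∃ p : T.Walk v x, p.IsPath ∧ p.length = T.dist v x := by
  classical
  obtain ⟨p, hp⟩ := hconn.exists_walk_length_eq_dist v x
  refine ⟨p.bypass, p.bypass_isPath, le_antisymm ?_ (SimpleGraph.dist_le _)⟩
  calc p.bypass.length ≤ p.length := SimpleGraph.Walk.length_bypass_le p
    _ = T.dist v x := hp

/-- In a tree, distances from a fixed vertex to two adjacent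
vertices differ by exactly one. -/
private lemma adjDist (hconn : T.Connected) (hacyc : T.IsAcyclic) (v : V) {x y : V}
    (h : T.Adj x y) :
    T.dist v y = T.dist v x + 1 ∨ T.dist v x = T.dist v y + 1 := by
  classical
  obtain ⟨p, hp, hpl⟩ := existsGeodesic hconn v x
  obtain ⟨q, hq, hql⟩ := existsGeodesic hconn v y
  have h1 : T.dist v y ≤ T.dist v x + 1 := by
    have := SimpleGraph.dist_le (p.concat h)
    rwa [SimpleGraph.Walk.length_concat, hpl] at this
  have h2 : T.dist v x ≤ T.dist v y + 1 := by
    have := SimpleGraph.dist_le (q.concat h.symm)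
    rwa [SimpleGraph.Walk.length_concat, hql] at this
  have hne : T.dist v x ≠ T.dist v y := by
    intro heq
    by_cases hy : y ∈ p.support
    · -- y occurs strictly before the end of p
      have htake := SimpleGraph.Walk.length_takeUntil_le p hy
      have hdvy : T.dist v y ≤ (p.takeUntil y hy).length := SimpleGraph.dist_le _
      have hsplit := p.take_spec hy
      have hdrop : (p.dropUntil y hy).length ≠ 0 := by
        intro h0
        exact h.ne' (SimpleGraph.Walk.eq_of_length_eq_zero h0)
      have hlen : (p.takeUntil y hy).length + (p.dropUntil y hy).length = p.length := by
        rw [← SimpleGraph.Walk.length_append, hsplit]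
      omega
    · -- p.concat h is a path from v to y; so is q; uniqueness
      have hpc : (p.concat h).IsPath := by
        rw [SimpleGraph.Walk.isPath_def] at hp ⊢
        rw [SimpleGraph.Walk.support_concat]
        exact List.Nodup.append hp (List.nodup_singleton y)
          (by simpa using fun hy' => hy hy')
      have := hacyc.path_unique ⟨p.concat h, hpc⟩ ⟨q, hq⟩
      have hlen : (p.concat h).length = q.length := by
        rw [show (p.concat h) = q from congrArg Subtype.val this]
      rw [SimpleGraph.Walk.length_concat, hpl, hql] at hlen
      omega
  omega

/-- In a tree there is no "local maximum" of the distance function along a path: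
a vertex cannot have two distinct neighbours both strictly closer to `v`. -/
private lemma noLocalMax (hconn : T.Connected) (hacyc : T.IsAcyclic) (v : V) {x y z : V}
    (hxy : T.Adj x y) (hzy : T.Adj z y) (hxz : x ≠ z)
    (hx : T.dist v x + 1 = T.dist v y) (hz : T.dist v z + 1 = T.dist v y) : False := by
  classical
  obtain ⟨p, hp, hpl⟩ := existsGeodesic hconn v x
  obtain ⟨q, hq, hql⟩ := existsGeodesic hconn v z
  have hyp : y ∉ p.support := by
    intro hy
    have hdvy : T.dist v y ≤ (p.takeUntil y hy).length := SimpleGraph.dist_le _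
    have := SimpleGraph.Walk.length_takeUntil_le p hy
    omega
  have hyq : y ∉ q.support := by
    intro hy
    have hdvy : T.dist v y ≤ (q.takeUntil y hy).length := SimpleGraph.dist_le _
    have := SimpleGraph.Walk.length_takeUntil_le q hy
    omega
  have hpc : (p.concat hxy).IsPath := by
    rw [SimpleGraph.Walk.isPath_def] at hp ⊢
    rw [SimpleGraph.Walk.support_concat]
    exact List.Nodup.append hp (List.nodup_singleton y)
      (by simpa using fun hy' => hyp hy')
  have hqc : (q.concat hzy).IsPath := by
    rw [SimpleGraph.Walk.isPath_def] at hq ⊢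
    rw [SimpleGraph.Walk.support_concat]
    exact List.Nodup.append hq (List.nodup_singleton y)
      (by simpa using fun hy' => hyq hy')
  have heq := hacyc.path_unique ⟨p.concat hxy, hpc⟩ ⟨q.concat hzy, hqc⟩
  have heqw : (p.concat hxy) = (q.concat hzy) := congrArg Subtype.val heq
  have hsup : p.support ++ [y] = q.support ++ [y] := by
    have := congrArg SimpleGraph.Walk.support heqw
    rwa [SimpleGraph.Walk.support_concat, SimpleGraph.Walk.support_concat] at this
  have hsup' : p.support = q.support := List.append_cancel_right hsup
  have : x = z := by
    have h1 := SimpleGraph.Walk.getLast_support p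
    have h2 := SimpleGraph.Walk.getLast_support q
    rw [← h1, ← h2]
    congr 1
  exact hxz this

/-- Along a path in a tree, once the distance to `v` has increased it can
never decrease again. -/
private lemma noDescent (hconn : T.Connected) (hacyc : T.IsAcyclic) (v : V) :
    ∀ {x y : V} (q : T.Walk x y), q.IsPath →
    ∀ w, T.Adj w x → T.dist v w + 1 = T.dist v x → w ∉ q.support →
    T.dist v y < T.dist v x → False := by
  intro x y q
  induction q with
  | nil => intro _ w _ _ _ hlt; omega
  | @cons x x₂ y h q ih =>
    intro hpath w hwx hwd hwsup hlt
    rcases adjDist hconn hacyc v h with h1 | h2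
    · -- distance keeps increasing
      rw [SimpleGraph.Walk.cons_isPath_iff] at hpath
      by_cases hyd : T.dist v y < T.dist v x₂
      · exact ih hpath.1 x h (by omega) hpath.2 hyd
      · -- then y's distance ≥ d x₂ > d x, but also d y < d x: contradiction? no:
        -- need d v y < d v x₂; we have d v y < d v x < d v x₂
        omega
    · -- descent at first step: local max at x with neighbours w and x₂
      have hx2 : x₂ ∈ (SimpleGraph.Walk.cons h q).support := by
        rw [SimpleGraph.Walk.support_cons]
        exact List.mem_cons_of_mem _ q.start_mem_support
      have hne : w ≠ x₂ := fun hE => hwsup (hE ▸ hx2)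
      exact noLocalMax hconn hacyc v hwx h.symm hne hwd (by omega)

/-- Uniqueness of the nearest point: if `w` and `w'` are joined by a path all of
whose vertices are at distance at least `m` from `v`, and both are at distance
exactly `m`, then `w = w'`. -/
private lemma nearestUnique (hconn : T.Connected) (hacyc : T.IsAcyclic) (v : V) {m : ℕ}
    {w w' : V} (q : T.Walk w w') (hq : q.IsPath)
    (hsup : ∀ z ∈ q.support, m ≤ T.dist v z)
    (hw : T.dist v w = m) (hw' : T.dist v w' = m) : w = w' := by
  cases q with
  | nil => rfl
  | @cons x x₂ y h q =>
    exfalso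
    have hx2m : m ≤ T.dist v x₂ := by
      apply hsup
      rw [SimpleGraph.Walk.support_cons]
      exact List.mem_cons_of_mem _ q.start_mem_support
    have hx2 : T.dist v x₂ = m + 1 := by
      rcases adjDist hconn hacyc v h with h1 | h2 <;> omega
    rw [SimpleGraph.Walk.cons_isPath_iff] at hq
    exact noDescent hconn hacyc v q hq.1 w h (by omega) hq.2 (by omega)

end TreeLemmas

/-- **Lemma (commuting subgroups with fixed points).**
If a group `H` acts on a tree `T` (a connected acyclic simple graph) by graph
automorphisms without inversions, and `A`, `B` are subgroups of `H` with
nonempty fixed-point sets `T^A`, `T^B`, which commute elementwise, then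
`T^A ∩ T^B ≠ ∅`. -/
theorem fixedSets_of_commuting_subgroups_intersect
    {V H : Type*} [Group H] [MulAction H V] (T : SimpleGraph V)
    (hconn : T.Connected) (hacyc : T.IsAcyclic)
    (hadj : ∀ (h : H) (v w : V), T.Adj v w → T.Adj (h • v) (h • w))
    (hnoinv : ∀ (h : H) (v w : V), T.Adj v w → ¬(h • v = w ∧ h • w = v))
    (A B : Subgroup H)
    (hA : ∃ v : V, ∀ a ∈ A, a • v = v)
    (hB : ∃ v : V, ∀ b ∈ B, b • v = v)
    (hcomm : ∀ a ∈ A, ∀ b ∈ B, a * b = b * a) :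
    ∃ v : V, (∀ a ∈ A, a • v = v) ∧ (∀ b ∈ B, b • v = v) := by
  classical
  obtain ⟨v, hv⟩ := hB
  obtain ⟨u, hu⟩ := hA
  -- graph homomorphism given by an element of H
  let φ : H → (T →g T) := fun h => ⟨fun x => h • x, fun hadj' => hadj h _ _ hadj'⟩
  -- distance is H-equivariant
  have dist_smul : ∀ (h : H) (x y : V), T.dist (h • x) (h • y) = T.dist x y := by
    have aux : ∀ (h : H) (x y : V), T.dist (h • x) (h • y) ≤ T.dist x y := by
      intro h x y
      obtain ⟨p, hp⟩ := hconn.exists_walk_length_eq_dist x y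
      have := SimpleGraph.dist_le (p.map (φ h))
      rwa [SimpleGraph.Walk.length_map, hp] at this
    intro h x y
    refine le_antisymm (aux h x y) ?_
    have := aux h⁻¹ (h • x) (h • y)
    simpa [inv_smul_smul] using this
  set S : V → Prop := fun x => ∀ a ∈ A, a • x = x with hS
  have hex : ∃ n, ∃ x, S x ∧ T.dist v x = n := ⟨T.dist v u, u, hu, rfl⟩
  set m := Nat.find hex with hm
  obtain ⟨w, hwS, hwd⟩ := Nat.find_spec hex
  have hmin : ∀ x, S x → m ≤ T.dist v x := by
    intro x hx
    by_contra hlt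
    exact Nat.find_min hex (by omega : T.dist v x < m) ⟨x, hx, rfl⟩
  refine ⟨w, hwS, fun b hb => ?_⟩
  -- b • w is also a nearest A-fixed point
  have hbS : S (b • w) := by
    intro a ha
    have hc := hcomm a ha b hb
    calc a • b • w = (a * b) • w := (mul_smul a b w).symm
      _ = (b * a) • w := by rw [hc]
      _ = b • a • w := mul_smul b a w
      _ = b • w := by rw [hwS a ha]
  have hbd : T.dist v (b • w) = m := by
    calc T.dist v (b • w) = T.dist (b • v) (b • w) := by rw [hv b hb]
      _ = T.dist v w := dist_smul b v w
      _ = m := hwd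
  -- a path from w to b • w; its vertices are all A-fixed
  obtain ⟨q0⟩ := hconn w (b • w)
  set q := q0.bypass with hqdef
  have hq : q.IsPath := q0.bypass_isPath
  have hsupS : ∀ z ∈ q.support, S z := by
    intro z hz a ha
    have hinj : Function.Injective (fun x : V => a • x) := MulAction.injective a
    have hmapP : ((q.map (φ a)).copy (hwS a ha) (hbS a ha)).IsPath := by
      rw [SimpleGraph.Walk.isPath_copy]
      exact SimpleGraph.Walk.map_isPath_of_injective hinj hq
    have hequ := hacyc.path_unique ⟨(q.map (φ a)).copy (hwS a ha) (hbS a ha), hmapP⟩ ⟨q, hq⟩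
    have heqw : (q.map (φ a)).copy (hwS a ha) (hbS a ha) = q := congrArg Subtype.val hequ
    have hsup : q.support.map (fun x => a • x) = q.support := by
      have := congrArg SimpleGraph.Walk.support heqw
      rwa [SimpleGraph.Walk.support_copy, SimpleGraph.Walk.support_map] at this
    exact listMapFix hsup z hz
  have := nearestUnique hconn hacyc v q hq (fun z hz => hmin z (hsupS z hz)) hwd hbd
  exact this.symm
end

section
/- If a group G acts on a tree such that every element of G fixes some vertex but there is no vertex fixed by all of G (a parabolic action), then G can be written as the union of a properly increasing sequence of subgroups G_0 ⊊ G_1 ⊊ G_2 ⊊ ⋯ with G = ⋃ G_n. -/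
namespace ParabolicAux
open SimpleGraph Walk

variable {V : Type*} {T : SimpleGraph V}

/-- The chosen geodesic path between two vertices. -/
noncomputable def pth (hc : T.Connected) (a b : V) : T.Walk a b :=
  (hc.exists_path_of_dist a b).choose

lemma pth_isPath (hc : T.Connected) (a b : V) : (pth hc a b).IsPath :=
  (hc.exists_path_of_dist a b).choose_spec.1

lemma pth_length (hc : T.Connected) (a b : V) : (pth hc a b).length = T.dist a b :=
  (hc.exists_path_of_dist a b).choose_spec.2

lemma eq_pth (hc : T.Connected) (hac : T.IsAcyclic) {a b : V} {p : T.Walk a b}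
    (hp : p.IsPath) : p = pth hc a b := by
  have := (SimpleGraph.isAcyclic_iff_path_unique.mp hac)
    (⟨p, hp⟩ : T.Path a b) ⟨pth hc a b, pth_isPath hc a b⟩
  exact congrArg Subtype.val this

lemma isPath_length (hc : T.Connected) (hac : T.IsAcyclic) {a b : V} {p : T.Walk a b}
    (hp : p.IsPath) : p.length = T.dist a b := by
  rw [eq_pth hc hac hp, pth_length]

lemma split_dist (hc : T.Connected) (hac : T.IsAcyclic) {a b z : V} {p : T.Walk a b}
    (hp : p.IsPath) (hz : z ∈ p.support) :
    T.dist a z + T.dist z b = p.length := by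
  classical
  have h1 := hp.takeUntil hz
  have h2 := hp.dropUntil hz
  have hlen := congrArg Walk.length (p.take_spec hz)
  rw [Walk.length_append] at hlen
  rw [← isPath_length hc hac h1, ← isPath_length hc hac h2]
  exact hlen

lemma mem_pth_dist (hc : T.Connected) (hac : T.IsAcyclic) {a b z : V}
    (hz : z ∈ (pth hc a b).support) : T.dist a z + T.dist z b = T.dist a b := by
  have := split_dist hc hac (pth_isPath hc a b) hz
  rwa [pth_length] at this

lemma eq_of_dist_eq (hc : T.Connected) (hac : T.IsAcyclic) {a b z z' : V} {p : T.Walk a b}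
    (hp : p.IsPath) (hz : z ∈ p.support) (hz' : z' ∈ p.support)
    (hd : T.dist a z = T.dist a z') : z = z' := by
  classical
  have hsplit := p.take_spec hz
  have hz'' : z' ∈ ((p.takeUntil z hz).append (p.dropUntil z hz)).support := by
    rw [hsplit]; exact hz'
  rcases (Walk.mem_support_append_iff _ _).mp hz'' with h | h
  · have e1 := split_dist hc hac (hp.takeUntil hz) h
    have e2 := isPath_length hc hac (hp.takeUntil hz)
    have : T.dist z' z = 0 := by omega
    exact (hc.dist_eq_zero_iff.mp this).symm
  · have e1 := split_dist hc hac (hp.dropUntil hz) h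
    have e2 := isPath_length hc hac (hp.dropUntil hz)
    have e3 := split_dist hc hac hp hz
    have e4 := split_dist hc hac hp hz'
    have : T.dist z z' = 0 := by omega
    exact hc.dist_eq_zero_iff.mp this

lemma adj_dist_le (hc : T.Connected) {x a b : V} (e : T.Adj a b) :
    T.dist x b ≤ T.dist x a + 1 := by
  have := SimpleGraph.dist_le ((pth hc x a).append (Walk.cons e Walk.nil))
  simpa [Walk.length_append, pth_length] using this

lemma adj_dist_ne (hc : T.Connected) (hac : T.IsAcyclic) {x a b : V} (e : T.Adj a b) :
    T.dist x a ≠ T.dist x b := by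
  intro hEq
  classical
  by_cases hb : b ∈ (pth hc x a).support
  · have := mem_pth_dist hc hac hb
    have hba : T.dist b a = 0 := by omega
    exact e.ne (hc.dist_eq_zero_iff.mp hba).symm
  · have hW : ((pth hc x a).append (Walk.cons e Walk.nil)).IsPath := by
      rw [Walk.isPath_def, Walk.support_append]
      simp [List.nodup_append, (pth_isPath hc x a).support_nodup, hb]
      exact fun y hy hyb => hb (hyb ▸ hy)
    have hlen := isPath_length hc hac hW
    rw [Walk.length_append] at hlen
    simp [pth_length] at hlen
    omega

lemma adj_dist_succ (hc : T.Connected) (hac : T.IsAcyclic) {x a b : V} (e : T.Adj a b)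
    (h : T.dist x a < T.dist x b) :
    T.dist x b = T.dist x a + 1 ∧ a ∈ (pth hc x b).support := by
  classical
  have hle := adj_dist_le hc e (x := x)
  have hEq : T.dist x b = T.dist x a + 1 := by omega
  have hb : b ∉ (pth hc x a).support := by
    intro hb
    have := mem_pth_dist hc hac hb
    omega
  have hW : ((pth hc x a).append (Walk.cons e Walk.nil)).IsPath := by
    rw [Walk.isPath_def, Walk.support_append]
    simp [List.nodup_append, (pth_isPath hc x a).support_nodup, hb]
    exact fun y hy hyb => hb (hyb ▸ hy)
  refine ⟨hEq, ?_⟩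
  rw [← eq_pth hc hac hW]
  exact (Walk.mem_support_append_iff _ _).mpr (Or.inl (Walk.end_mem_support _))

lemma no_peak (hc : T.Connected) (hac : T.IsAcyclic) {x z z' z'' : V}
    (e1 : T.Adj z z') (e2 : T.Adj z' z'') (hne : z ≠ z'')
    (h : T.dist x z' = T.dist x z + 1) : T.dist x z'' = T.dist x z' + 1 := by
  rcases lt_or_gt_of_ne (adj_dist_ne hc hac e2 (x := x)) with hlt | hgt
  · exact (adj_dist_succ hc hac e2 hlt).1
  · exfalso
    have h2 := adj_dist_succ hc hac e2.symm hgt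
    have h1 := adj_dist_succ hc hac (x := x) e1 (by omega)
    exact hne (eq_of_dist_eq hc hac (pth_isPath hc x z') h1.2 h2.2 (by omega))

lemma climb (hc : T.Connected) (hac : T.IsAcyclic) {x : V} :
    ∀ {a₁ z : V} (q : T.Walk a₁ z) (a : V), T.Adj a a₁ → a ∉ q.support → q.IsPath →
      T.dist x a₁ = T.dist x a + 1 → T.dist x z = T.dist x a₁ + q.length := by
  intro a₁ z q
  induction q with
  | nil => intro a _ _ _ _; simp
  | @cons u c w e' q'' ih =>
    intro a ha hmem hpath hd
    have ha' : a ∉ q''.support := fun hm2 => hmem (by simp [Walk.support_cons, hm2])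
    have hne : a ≠ c := fun hh => ha' (hh ▸ q''.start_mem_support)
    have hd2 := no_peak hc hac ha e' hne hd
    have hu : u ∉ q''.support := ((Walk.cons_isPath_iff _ _).mp hpath).2
    have := ih u e' hu hpath.of_cons hd2
    rw [Walk.length_cons]
    omega

lemma min_seg (hc : T.Connected) (hac : T.IsAcyclic) {x m z : V} (q : T.Walk m z)
    (hq : q.IsPath) (hmin : ∀ y ∈ q.support, T.dist x m ≤ T.dist x y) :
    T.dist x z = T.dist x m + q.length := by
  cases q with
  | nil => simp
  | @cons u c w e q₁ =>
    have hm1 : T.dist x c = T.dist x m + 1 := by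
      have hne := adj_dist_ne hc hac e (x := x)
      have hle := adj_dist_le hc e (x := x)
      have hge := hmin c (by simp [Walk.support_cons])
      omega
    have hu : m ∉ q₁.support := ((Walk.cons_isPath_iff _ _).mp hq).2
    have := climb hc hac q₁ m e hu hq.of_cons hm1
    rw [Walk.length_cons]
    omega


section Group

variable {G : Type*} [Group G] [MulAction G V]

/-- The action of `g` as a graph homomorphism. -/
def smHom (hadj : ∀ (g : G) (v w : V), T.Adj v w → T.Adj (g • v) (g • w)) (g : G) :
    T →g T :=
  ⟨fun v => g • v, fun h => hadj g _ _ h⟩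

variable (hadj : ∀ (g : G) (v w : V), T.Adj v w → T.Adj (g • v) (g • w))

include hadj

lemma pth_map (hc : T.Connected) (hac : T.IsAcyclic) (g : G) (a b : V) :
    pth hc (g • a) (g • b) = (pth hc a b).map (smHom hadj g) :=
  (eq_pth hc hac (Walk.map_isPath_of_injective (f := smHom hadj g)
    (MulAction.injective g) (pth_isPath hc a b))).symm

lemma dist_smul (hc : T.Connected) (hac : T.IsAcyclic) (g : G) (a b : V) :
    T.dist (g • a) (g • b) = T.dist a b := by
  rw [← pth_length hc (g • a) (g • b), pth_map hadj hc hac]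
  exact (Walk.length_map _ _).trans (pth_length hc a b)

lemma smul_mem_pth (hc : T.Connected) (hac : T.IsAcyclic) {g : G} {a b z : V}
    (hz : z ∈ (pth hc a b).support) : g • z ∈ (pth hc (g • a) (g • b)).support := by
  rw [pth_map hadj hc hac]
  have := List.mem_map_of_mem (f := smHom hadj g) hz
  rw [← Walk.support_map] at this
  exact this

lemma convex_fix (hc : T.Connected) (hac : T.IsAcyclic) {g : G} {a b z : V}
    (ha : g • a = a) (hb : g • b = b) (hz : z ∈ (pth hc a b).support) : g • z = z := by
  have h1 : g • z ∈ (pth hc a b).support := by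
    have := smul_mem_pth hadj hc hac (g := g) hz
    rwa [ha, hb] at this
  have h2 : T.dist a (g • z) = T.dist a z := by
    calc T.dist a (g • z) = T.dist (g • a) (g • z) := by rw [ha]
    _ = T.dist a z := dist_smul hadj hc hac g a z
  exact eq_of_dist_eq hc hac (pth_isPath hc a b) h1 hz h2

omit hadj in
lemma exists_closest {g : G} (x : V) (hg : ∃ v : V, g • v = v) :
    ∃ p, g • p = p ∧ ∀ y, g • y = y → T.dist x p ≤ T.dist x y := by
  obtain ⟨v, hv⟩ := hg
  have hS : {n | ∃ y, g • y = y ∧ T.dist x y = n}.Nonempty := ⟨_, v, hv, rfl⟩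
  obtain ⟨y, hy, hdy⟩ := Nat.sInf_mem hS
  exact ⟨y, hy, fun y' hy' => hdy ▸ Nat.sInf_le ⟨y', hy', rfl⟩⟩

lemma gate (hc : T.Connected) (hac : T.IsAcyclic) {g : G} {p : V} (x : V)
    (hp : g • p = p) (hmin : ∀ y, g • y = y → T.dist x p ≤ T.dist x y) :
    ∀ y, g • y = y → T.dist x p + T.dist p y = T.dist x y := by
  intro y hy
  have := min_seg hc hac (pth hc p y) (pth_isPath hc p y)
    (fun z hz => hmin z (convex_fix hadj hc hac hp hy hz))
  rw [pth_length] at this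
  omega

omit hadj in
lemma mem_pth_symm (hc : T.Connected) (hac : T.IsAcyclic) {a b z : V}
    (hz : z ∈ (pth hc a b).support) : z ∈ (pth hc b a).support := by
  have hrev : (pth hc a b).reverse.IsPath := (pth_isPath hc a b).reverse
  rw [← eq_pth hc hac hrev, Walk.support_reverse]
  exact List.mem_reverse.mpr hz

lemma midfix (hc : T.Connected) (hac : T.IsAcyclic) {g : G} (x : V)
    (hg : ∃ v : V, g • v = v) :
    ∃ p, g • p = p ∧ p ∈ (pth hc x (g • x)).support ∧
      2 * T.dist x p = T.dist x (g • x) := by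
  obtain ⟨p, hp, hmin⟩ := exists_closest (T := T) x hg
  have hdp : T.dist p (g • x) = T.dist x p := by
    have h := dist_smul hadj hc hac g p x
    rw [hp] at h
    rw [h, SimpleGraph.dist_comm]
  have hkey : ∀ z, z ∈ (pth hc x p).support → z ∈ (pth hc p (g • x)).support → z = p := by
    intro z h1 h2
    have e1 := mem_pth_dist hc hac h1
    have h1' : g • z ∈ (pth hc (g • x) (g • p)).support := smul_mem_pth hadj hc hac h1
    rw [hp] at h1'
    have h2' : z ∈ (pth hc (g • x) p).support := mem_pth_symm hc hac h2
    have c1 := mem_pth_dist hc hac h1'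
    have c2 := mem_pth_dist hc hac h2'
    have d1 : T.dist (g • x) (g • z) = T.dist x z := dist_smul hadj hc hac g x z
    have d2 : T.dist (g • z) p = T.dist z p := by
      have h := dist_smul hadj hc hac g z p
      rwa [hp] at h
    have hfz : g • z = z :=
      eq_of_dist_eq hc hac (pth_isPath hc (g • x) p) h1' h2' (by omega)
    have := hmin z hfz
    have hz0 : T.dist z p = 0 := by omega
    exact hc.dist_eq_zero_iff.mp hz0
  set W := (pth hc x p).append (pth hc p (g • x)) with hWdef
  have hsupp2 : (pth hc p (g • x)).support = p :: (pth hc p (g • x)).support.tail :=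
    Walk.support_eq_cons _
  have h2 := (pth_isPath hc p (g • x)).support_nodup
  have hp_tail : p ∉ (pth hc p (g • x)).support.tail := by
    rw [hsupp2] at h2
    exact (List.nodup_cons.mp h2).1
  have hWpath : W.IsPath := by
    rw [Walk.isPath_def, hWdef, Walk.support_append, List.nodup_append]
    refine ⟨(pth_isPath hc x p).support_nodup, ?_, ?_⟩
    · rw [hsupp2] at h2
      exact (List.nodup_cons.mp h2).2
    · intro z hz1 z' hz2 hzz'
      subst hzz'
      have hz2' : z ∈ (pth hc p (g • x)).support := List.mem_of_mem_tail hz2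
      have := hkey z hz1 hz2'
      subst this
      exact hp_tail hz2
  have hWlen := isPath_length hc hac hWpath
  rw [hWdef, Walk.length_append, pth_length, pth_length] at hWlen
  refine ⟨p, hp, ?_, by omega⟩
  rw [← eq_pth hc hac hWpath]
  exact (Walk.mem_support_append_iff _ _).mpr (Or.inl (Walk.end_mem_support _))

lemma pair (hc : T.Connected) (hac : T.IsAcyclic)
    (hfix : ∀ g : G, ∃ v : V, g • v = v) (g h : G) :
    ∃ v : V, g • v = v ∧ h • v = v := by
  obtain ⟨x, hx⟩ := hfix (g * h)
  rw [mul_smul] at hx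
  have hgh : h • x = g⁻¹ • x := eq_inv_smul_iff.mpr hx
  obtain ⟨p₁, hp₁, hm₁, hd₁⟩ := midfix hadj hc hac (g := h) x (hfix h)
  obtain ⟨p₂, hp₂, hm₂, hd₂⟩ := midfix hadj hc hac (g := g⁻¹) x (hfix g⁻¹)
  rw [← hgh] at hm₂ hd₂
  have hpp : p₂ = p₁ :=
    eq_of_dist_eq hc hac (pth_isPath hc x (h • x)) hm₂ hm₁ (by omega)
  subst hpp
  exact ⟨p₂, (inv_smul_eq_iff.mp hp₂).symm, hp₁⟩

omit hadj in
lemma getVert_dist (hc : T.Connected) (hac : T.IsAcyclic) :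
    ∀ {a b : V} (p : T.Walk a b), p.IsPath → ∀ n, n ≤ p.length →
      T.dist a (p.getVert n) = n := by
  intro a b p
  induction p with
  | nil =>
    intro _ n hn
    rw [Walk.length_nil, Nat.le_zero] at hn
    subst hn
    simp
  | @cons u c w e q ih =>
    intro hp n hn
    cases n with
    | zero => simp
    | succ m =>
      rw [Walk.getVert_cons_succ]
      have hm : m ≤ q.length := by
        rw [Walk.length_cons] at hn; omega
      have hzq : q.getVert m ∈ q.support :=
        SimpleGraph.Walk.mem_support_iff_exists_getVert.mpr ⟨m, rfl, hm⟩
      have hz1 := split_dist hc hac hp.of_cons hzq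
      have hz2 := split_dist hc hac hp
        (by rw [Walk.support_cons]; exact List.mem_cons_of_mem _ hzq)
      rw [Walk.length_cons] at hz2
      have := ih hp.of_cons m hm
      omega

lemma core (hc : T.Connected) (hac : T.IsAcyclic)
    (hfix : ∀ g : G, ∃ v : V, g • v = v) (v0 : V) (pg : G → V)
    (hpfix : ∀ g : G, g • pg g = pg g)
    (hpmin : ∀ (g : G) (y : V), g • y = y → T.dist v0 (pg g) ≤ T.dist v0 y)
    (g k : G) (z : V) (hz : z ∈ (pth hc v0 (pg k)).support)
    (hdz : T.dist v0 (pg g) ≤ T.dist v0 z) : g • z = z := by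
  obtain ⟨x, hxg, hxk⟩ := pair hadj hc hac hfix g k
  have gdk := gate hadj hc hac v0 (hpfix k) (hpmin k) x hxk
  have gdg := gate hadj hc hac v0 (hpfix g) (hpmin g) x hxg
  set W := (pth hc v0 (pg k)).append (pth hc (pg k) x) with hWdef
  have hWlen : W.length = T.dist v0 x := by
    rw [hWdef, Walk.length_append, pth_length, pth_length]; exact gdk
  have hWpath : W.IsPath := W.isPath_of_length_eq_dist hWlen
  have hz1 : z ∈ (pth hc v0 x).support := by
    rw [← eq_pth hc hac hWpath]
    exact (Walk.mem_support_append_iff _ _).mpr (Or.inl hz)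
  set W' := (pth hc v0 (pg g)).append (pth hc (pg g) x) with hW'def
  have hW'len : W'.length = T.dist v0 x := by
    rw [hW'def, Walk.length_append, pth_length, pth_length]; exact gdg
  have hW'path : W'.IsPath := W'.isPath_of_length_eq_dist hW'len
  have hz2 : z ∈ W'.support := by rw [eq_pth hc hac hW'path]; exact hz1
  rcases (Walk.mem_support_append_iff _ _).mp hz2 with hcase | hcase
  · have := mem_pth_dist hc hac hcase
    have hz0 : T.dist z (pg g) = 0 := by omega
    have : z = pg g := hc.dist_eq_zero_iff.mp hz0
    rw [this]
    exact hpfix g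
  · exact convex_fix hadj hc hac (hpfix g) hxg hcase

end Group

lemma extract {G : Type*} [Group G] (S : ℕ → Subgroup G) (hmono : Monotone S)
    (hex : ∀ g : G, ∃ n, g ∈ S n) (hne : ∀ n, ∃ g : G, g ∉ S n) :
    ∃ Gn : ℕ → Subgroup G, StrictMono Gn ∧ ∀ g : G, ∃ n, g ∈ Gn n := by
  classical
  choose gb hgb using hne
  choose idx hidx using hex
  let f : ℕ → ℕ := fun k => Nat.rec 0 (fun m fm => max (fm + 1) (idx (gb fm))) k
  have hf : ∀ k, f (k + 1) = max (f k + 1) (idx (gb (f k))) := fun k => rfl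
  have hfs : StrictMono f := strictMono_nat_of_lt_succ (fun k => by
    rw [hf]; omega)
  refine ⟨fun k => S (f k), strictMono_nat_of_lt_succ (fun k => ?_), fun g => ?_⟩
  · rw [SetLike.lt_iff_le_and_exists]
    refine ⟨hmono (hfs (Nat.lt_succ_self k)).le, gb (f k), ?_, hgb (f k)⟩
    exact hmono (by rw [hf]; omega) (hidx (gb (f k)))
  · exact ⟨idx g, hmono (hfs.le_apply) (hidx g)⟩

end ParabolicAux

/-- **Lemma (parabolic actions and cofinality ω).**
If a group `G` acts on a tree `T` by graph automorphisms such that every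
element of `G` fixes some vertex but no vertex is fixed by all of `G`
(a parabolic action), then `G` is the union of a properly increasing
sequence of subgroups. -/
theorem parabolic_action_union_increasing_subgroups
    {V G : Type*} [Group G] [MulAction G V] (T : SimpleGraph V)
    (hconn : T.Connected) (hacyc : T.IsAcyclic)
    (hadj : ∀ (g : G) (v w : V), T.Adj v w → T.Adj (g • v) (g • w))
    (hfix : ∀ g : G, ∃ v : V, g • v = v)
    (hnoglobal : ¬ ∃ v : V, ∀ g : G, g • v = v) :
    ∃ Gn : ℕ → Subgroup G, StrictMono Gn ∧ ∀ g : G, ∃ n, g ∈ Gn n := by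
  classical
  obtain ⟨v0, -⟩ := hfix 1
  choose pg hpfix hpmin using fun g : G => ParabolicAux.exists_closest (T := T) v0 (hfix g)
  -- distances to the fixed-point sets are unbounded
  have hunb : ∀ n : ℕ, ∃ g : G, n ≤ T.dist v0 (pg g) := by
    by_contra hb
    push_neg at hb
    obtain ⟨n, hn⟩ := hb
    have hSne : (Set.range fun g : G => T.dist v0 (pg g)).Nonempty := ⟨_, 1, rfl⟩
    have hSbdd : BddAbove (Set.range fun g : G => T.dist v0 (pg g)) :=
      ⟨n, by rintro _ ⟨g, rfl⟩; exact (hn g).le⟩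
    obtain ⟨g₀, hg₀⟩ := Nat.sSup_mem hSne hSbdd
    refine hnoglobal ⟨pg g₀, fun g => ?_⟩
    refine ParabolicAux.core hadj hconn hacyc hfix v0 pg hpfix hpmin g g₀ (pg g₀)
      (SimpleGraph.Walk.end_mem_support _) ?_
    have h1 : T.dist v0 (pg g) ≤ sSup (Set.range fun g : G => T.dist v0 (pg g)) :=
      le_csSup hSbdd ⟨g, rfl⟩
    have h2 : T.dist v0 (pg g₀) = sSup (Set.range fun g : G => T.dist v0 (pg g)) := hg₀
    omega
  choose gs hgs using hunb
  set vs : ℕ → V := fun n => (ParabolicAux.pth hconn v0 (pg (gs n))).getVert n with hvs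
  have hvs_mem : ∀ n, vs n ∈ (ParabolicAux.pth hconn v0 (pg (gs n))).support := fun n =>
    SimpleGraph.Walk.mem_support_iff_exists_getVert.mpr
      ⟨n, rfl, by rw [ParabolicAux.pth_length]; exact hgs n⟩
  have hvs_dist : ∀ n, T.dist v0 (vs n) = n := fun n =>
    ParabolicAux.getVert_dist hconn hacyc (ParabolicAux.pth hconn v0 (pg (gs n)))
      (ParabolicAux.pth_isPath hconn _ _) n
      (by rw [ParabolicAux.pth_length]; exact hgs n)
  have hvs_fix : ∀ (g : G) (n : ℕ), T.dist v0 (pg g) ≤ n → g • vs n = vs n := by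
    intro g n hn
    refine ParabolicAux.core hadj hconn hacyc hfix v0 pg hpfix hpmin g (gs n) (vs n)
      (hvs_mem n) ?_
    rw [hvs_dist n]
    exact hn
  have hmono : Monotone (fun n => MulAction.stabilizer G (vs n)) := by
    refine monotone_nat_of_le_succ (fun n g hg => ?_)
    rw [MulAction.mem_stabilizer_iff] at hg ⊢
    have h1 : T.dist v0 (pg g) ≤ n := by
      have := hpmin g (vs n) hg
      rwa [hvs_dist n] at this
    exact hvs_fix g (n + 1) (by omega)
  refine ParabolicAux.extract (fun n => MulAction.stabilizer G (vs n)) hmono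
    (fun g => ⟨T.dist v0 (pg g), MulAction.mem_stabilizer_iff.mpr
      (hvs_fix g _ le_rfl)⟩) (fun n => ?_)
  by_contra hco
  push_neg at hco
  exact hnoglobal ⟨vs n, fun g => MulAction.mem_stabilizer_iff.mp (hco g)⟩
end

section
/- Let A and B be groups and X a B-set with no singleton B-orbit (every orbit has more than one element). Then the abelianisation of the permutational wreath product G = A ≀_X B is isomorphic to (A^{ab})^{(Y)} × B^{ab}, where Y = B\X is the set of B-orbits of X. In particular, if the orbit set Y is finite and nonempty, then G^{ab} is finite if and only if both A^{ab} and B^{ab} are finite. -/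
/-- The restricted direct sum `A^{(X)}`: finitely supported functions `X → A`. -/
def FinSuppSubgroup (X A : Type*) [Group A] : Subgroup (X → A) where
  carrier := {f | (Function.mulSupport f).Finite}
  one_mem' := by simp [Function.mulSupport_one]
  mul_mem' := fun hf hg =>
    Set.Finite.subset (hf.union hg) (Function.mulSupport_mul _ _)
  inv_mem' := fun hf => by simpa using hf

variable {X A B : Type*} [Group A] [Group B] [MulAction B X]

lemma shift_mem (b : B) (f : ↥(FinSuppSubgroup X A)) :
    (fun x => (f : X → A) (b⁻¹ • x)) ∈ FinSuppSubgroup X A := by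
  have hsub : Function.mulSupport (fun x => (f : X → A) (b⁻¹ • x)) ⊆
      (fun x => b • x) '' Function.mulSupport (f : X → A) := by
    intro x hx
    exact ⟨b⁻¹ • x, hx, by simp⟩
  exact Set.Finite.subset (Set.Finite.image _ f.2) hsub

/-- Coordinate shift by `b` as an automorphism of `A^{(X)}`. -/
def wreathShift (X : Type*) (A : Type*) [Group A] {B : Type*} [Group B] [MulAction B X]
    (b : B) : ↥(FinSuppSubgroup X A) ≃* ↥(FinSuppSubgroup X A) where
  toFun f := ⟨fun x => (f : X → A) (b⁻¹ • x), shift_mem b f⟩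
  invFun f := ⟨fun x => (f : X → A) (b • x), by simpa using shift_mem b⁻¹ f⟩
  left_inv f := by ext x; simp
  right_inv f := by ext x; simp
  map_mul' f g := by ext x; simp

/-- The action of `B` on `A^{(X)}` by coordinate shifts, as a homomorphism. -/
def wreathAut (X A B : Type*) [Group A] [Group B] [MulAction B X] :
    B →* MulAut ↥(FinSuppSubgroup X A) where
  toFun := wreathShift X A
  map_one' := by ext f x; simp [wreathShift]
  map_mul' b c := by ext f x; simp [wreathShift, mul_smul]

/-- The permutational wreath product `A ≀_X B = A^{(X)} ⋊ B`. -/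
abbrev Wreath (X A B : Type*) [Group A] [Group B] [MulAction B X] :=
  ↥(FinSuppSubgroup X A) ⋊[wreathAut X A B] B

namespace AbW

open scoped Classical

section Glue
variable {I C T : Type*} [Group C] [CommGroup T]

lemma memFin (f : ↥(FinSuppSubgroup I C)) : (Function.mulSupport (f : I → C)).Finite := f.2

noncomputable def sgl (i : I) : C →* ↥(FinSuppSubgroup I C) where
  toFun a := ⟨Pi.mulSingle i a,
    (Set.finite_singleton i).subset Pi.mulSupport_mulSingle_subset⟩
  map_one' := by ext z; simp
  map_mul' a b := by
    ext z
    by_cases h : z = i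
    · subst h; simp
    · simp [Pi.mulSingle_eq_of_ne h]

@[simp] lemma sgl_apply (i : I) (a : C) (z : I) :
    ((sgl i a : ↥(FinSuppSubgroup I C)) : I → C) z = (Pi.mulSingle i a : I → C) z := rfl

noncomputable def glueFun (e : I → (C →* T)) (f : ↥(FinSuppSubgroup I C)) : T :=
  ∏ x ∈ (memFin f).toFinset, e x ((f : I → C) x)

lemma glueFun_eq (e : I → (C →* T)) (f : ↥(FinSuppSubgroup I C)) {s : Finset I}
    (hs : Function.mulSupport (f : I → C) ⊆ ↑s) :
    glueFun e f = ∏ x ∈ s, e x ((f : I → C) x) := by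
  refine Finset.prod_subset (fun x hx => hs ((memFin f).mem_toFinset.mp hx))
    (fun x _ hx' => ?_)
  have : (f : I → C) x = 1 := by
    by_contra h
    exact hx' ((memFin f).mem_toFinset.mpr h)
  rw [this, map_one]

noncomputable def glue (e : I → (C →* T)) : ↥(FinSuppSubgroup I C) →* T where
  toFun := glueFun e
  map_one' := by
    show glueFun e 1 = 1
    rw [glueFun_eq e 1 (s := ∅) (by simp)]
    simp
  map_mul' f g := by
    show glueFun e (f * g) = glueFun e f * glueFun e g
    have hf : Function.mulSupport (f : I → C) ⊆ ↑((memFin f).toFinset ∪ (memFin g).toFinset) := by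
      intro x hx; simp [(memFin f).mem_toFinset, hx]
    have hg : Function.mulSupport (g : I → C) ⊆ ↑((memFin f).toFinset ∪ (memFin g).toFinset) := by
      intro x hx; simp [(memFin g).mem_toFinset, hx]
    have hfg : Function.mulSupport ((f * g : ↥(FinSuppSubgroup I C)) : I → C) ⊆
        ↑((memFin f).toFinset ∪ (memFin g).toFinset) := by
      intro x hx
      have h1 : (f : I → C) x ≠ 1 ∨ (g : I → C) x ≠ 1 := by
        by_contra h
        push_neg at h
        have h2 : ((f * g : ↥(FinSuppSubgroup I C)) : I → C) x = 1 := by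
          show (f : I → C) x * (g : I → C) x = 1
          rw [h.1, h.2, one_mul]
        exact hx h2
      rcases h1 with h | h
      · exact hf h
      · exact hg h
    rw [glueFun_eq e _ hfg, glueFun_eq e f hf, glueFun_eq e g hg, ← Finset.prod_mul_distrib]
    exact Finset.prod_congr rfl fun x _ => map_mul _ _ _

lemma glue_eq (e : I → (C →* T)) (f : ↥(FinSuppSubgroup I C)) {s : Finset I}
    (hs : Function.mulSupport (f : I → C) ⊆ ↑s) :
    glue e f = ∏ x ∈ s, e x ((f : I → C) x) := glueFun_eq e f hs

@[simp] lemma glue_sgl (e : I → (C →* T)) (i : I) (a : C) :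
    glue e (sgl i a) = e i a := by
  rw [glue_eq e _ (s := {i}) (by
    intro z hz
    have h1 : (Pi.mulSingle i a : I → C) z ≠ 1 := hz
    by_contra h
    simp only [Finset.coe_singleton, Set.mem_singleton_iff] at h
    exact h1 (show (Pi.mulSingle i a : I → C) z = 1 from
      Pi.mulSingle_eq_of_ne (M := fun _ => C) h a)), Finset.prod_singleton]
  simp

lemma hom_eq_prod (θ : ↥(FinSuppSubgroup I C) →* T) (s : Finset I)
    (f : ↥(FinSuppSubgroup I C)) (hs : Function.mulSupport (f : I → C) ⊆ ↑s) :
    θ f = ∏ x ∈ s, θ (sgl x ((f : I → C) x)) := by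
  induction s using Finset.induction generalizing f with
  | empty =>
    have : f = 1 := by
      ext z
      by_contra h
      simpa using hs h
    simp [this]
  | @insert a t ha ih =>
    set g : ↥(FinSuppSubgroup I C) := (sgl a ((f : I → C) a))⁻¹ * f with hgdef
    have hval : ∀ z, z ≠ a → (g : I → C) z = (f : I → C) z := by
      intro z hz
      show ((Pi.mulSingle a ((f : I → C) a) : I → C) z)⁻¹ * (f : I → C) z = (f : I → C) z
      rw [Pi.mulSingle_eq_of_ne hz, inv_one, one_mul]
    have hga : (g : I → C) a = 1 := by
      show ((Pi.mulSingle a ((f : I → C) a) : I → C) a)⁻¹ * (f : I → C) a = 1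
      rw [Pi.mulSingle_eq_same, inv_mul_cancel]
    have hgs : Function.mulSupport (g : I → C) ⊆ ↑t := by
      intro z hz
      have hza : z ≠ a := by
        intro h; subst h; exact hz hga
      have h2 : (f : I → C) z ≠ 1 := by rw [← hval z hza]; exact hz
      have h3 := hs h2
      simp only [Finset.coe_insert, Set.mem_insert_iff] at h3
      rcases h3 with h | h
      · exact absurd h hza
      · exact h
    have hf : f = sgl a ((f : I → C) a) * g := by
      rw [hgdef, ← mul_assoc, mul_inv_cancel, one_mul]
    have h2 : θ f = θ (sgl a ((f : I → C) a)) * θ g := by rw [← map_mul, ← hf]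
    rw [h2, ih g hgs, Finset.prod_insert ha]
    congr 1
    exact Finset.prod_congr rfl fun x hx => by rw [hval x (fun h => ha (h ▸ hx))]

lemma hom_ext_sgl {θ₁ θ₂ : ↥(FinSuppSubgroup I C) →* T}
    (h : ∀ i a, θ₁ (sgl i a) = θ₂ (sgl i a)) : θ₁ = θ₂ := by
  ext f
  rw [hom_eq_prod θ₁ (memFin f).toFinset f (by simp [(memFin f).coe_toFinset]),
    hom_eq_prod θ₂ (memFin f).toFinset f (by simp [(memFin f).coe_toFinset])]
  exact Finset.prod_congr rfl fun x _ => h x _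

end Glue

section W

variable (X A B : Type*) [Group A] [Group B] [MulAction B X]

/-- The orbit quotient. -/
local notation "Q" => Quotient (MulAction.orbitRel B X)

lemma conj_triv {G : Type*} [CommGroup G] (a b : G) : a * b * a⁻¹ = b := by
  rw [mul_comm a b, mul_assoc, mul_inv_cancel, mul_one]

noncomputable def Phi : ↥(FinSuppSubgroup X A) →* ↥(FinSuppSubgroup
    (Quotient (MulAction.orbitRel B X)) (Abelianization A)) :=
  glue fun x => (sgl (Quotient.mk (MulAction.orbitRel B X) x)).comp Abelianization.of

variable {X A B}

lemma Phi_sgl (x : X) (a : A) :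
    Phi X A B (sgl x a) =
      sgl (Quotient.mk (MulAction.orbitRel B X) x) (Abelianization.of a) :=
  glue_sgl _ _ _

lemma shift_sgl (b : B) (x : X) (a : A) :
    (wreathAut X A B b) (sgl x a) = sgl (b • x) a := by
  ext z
  show (Pi.mulSingle x a : X → A) (b⁻¹ • z) = (Pi.mulSingle (b • x) a : X → A) z
  by_cases h : z = b • x
  · subst h
    rw [inv_smul_smul, Pi.mulSingle_eq_same, Pi.mulSingle_eq_same]
  · rw [show ((Pi.mulSingle (b • x) a : X → A) z) = 1 from
      Pi.mulSingle_eq_of_ne (M := fun _ => A) h a,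
      show ((Pi.mulSingle x a : X → A) (b⁻¹ • z)) = 1 from
      Pi.mulSingle_eq_of_ne (M := fun _ => A)
        (fun hc => h (by rw [← hc, smul_inv_smul])) a]

lemma mk_smul (b : B) (x : X) :
    Quotient.mk (MulAction.orbitRel B X) (b • x) = Quotient.mk _ x :=
  Quotient.sound ⟨b, rfl⟩

lemma Phi_shift (b : B) :
    (Phi X A B).comp ((wreathAut X A B b).toMonoidHom) = Phi X A B :=
  hom_ext_sgl fun x a => by
    simp only [MonoidHom.comp_apply, MulEquiv.coe_toMonoidHom]
    rw [shift_sgl, Phi_sgl, Phi_sgl, mk_smul]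

variable (X A B)

noncomputable def uu : Wreath X A B →*
    (↥(FinSuppSubgroup (Quotient (MulAction.orbitRel B X)) (Abelianization A))
      × Abelianization B) :=
  SemidirectProduct.lift ((MonoidHom.inl _ _).comp (Phi X A B))
    ((MonoidHom.inr _ _).comp Abelianization.of)
    (fun b => by
      refine MonoidHom.ext fun f => ?_
      simp only [MonoidHom.comp_apply, MulEquiv.coe_toMonoidHom, MulAut.conj_apply]
      have h1 : Phi X A B ((wreathAut X A B b) f) = Phi X A B f :=
        DFunLike.congr_fun (Phi_shift b) f
      rw [h1, conj_triv])

noncomputable def cAb (y : Quotient (MulAction.orbitRel B X)) :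
    Abelianization A →* Abelianization (Wreath X A B) :=
  Abelianization.lift ((Abelianization.of).comp
    (SemidirectProduct.inl.comp (sgl (Quotient.out y))))

noncomputable def vMA : ↥(FinSuppSubgroup (Quotient (MulAction.orbitRel B X))
    (Abelianization A)) →* Abelianization (Wreath X A B) :=
  glue (cAb X A B)

noncomputable def vBA : Abelianization B →* Abelianization (Wreath X A B) :=
  Abelianization.lift ((Abelianization.of).comp
    (SemidirectProduct.inr : B →* Wreath X A B))

variable {X A B}

lemma of_inl_conj (b : B) (f : ↥(FinSuppSubgroup X A)) :
    Abelianization.of (SemidirectProduct.inl ((wreathAut X A B b) f) : Wreath X A B) =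
      Abelianization.of (SemidirectProduct.inl f) := by
  rw [SemidirectProduct.inl_aut, map_mul, map_mul, map_inv, map_inv, conj_triv]

lemma of_inl_sgl_orbit {x x' : X}
    (h : Quotient.mk (MulAction.orbitRel B X) x = Quotient.mk _ x') (a : A) :
    Abelianization.of (SemidirectProduct.inl (sgl x a) : Wreath X A B) =
      Abelianization.of (SemidirectProduct.inl (sgl x' a)) := by
  have h2 : x ∈ MulAction.orbit B x' := Quotient.exact h
  rw [MulAction.mem_orbit_iff] at h2
  obtain ⟨b, hb⟩ := h2
  rw [← hb, ← shift_sgl, of_inl_conj]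

section W2

variable {X A B : Type*} [Group A] [Group B] [MulAction B X]

@[simp] lemma uu_inl (f : ↥(FinSuppSubgroup X A)) :
    uu X A B (SemidirectProduct.inl f) = (Phi X A B f, 1) := by
  simp [uu]

@[simp] lemma uu_inr (b : B) :
    uu X A B (SemidirectProduct.inr b) = (1, Abelianization.of b) := by
  simp [uu]

@[simp] lemma cAb_of (y : Quotient (MulAction.orbitRel B X)) (a : A) :
    cAb X A B y (Abelianization.of a) =
      Abelianization.of (SemidirectProduct.inl (sgl (Quotient.out y) a) : Wreath X A B) := by
  simp [cAb]

@[simp] lemma vMA_sgl (y : Quotient (MulAction.orbitRel B X)) (c : Abelianization A) :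
    vMA X A B (sgl y c) = cAb X A B y c :=
  glue_sgl _ _ _

variable (X A B)

noncomputable def alphaH : Abelianization (Wreath X A B) →*
    (↥(FinSuppSubgroup (Quotient (MulAction.orbitRel B X)) (Abelianization A))
      × Abelianization B) :=
  Abelianization.lift (uu X A B)

noncomputable def betaH :
    (↥(FinSuppSubgroup (Quotient (MulAction.orbitRel B X)) (Abelianization A))
      × Abelianization B) →* Abelianization (Wreath X A B) :=
  ((vMA X A B).comp (MonoidHom.fst _ _)) * ((vBA X A B).comp (MonoidHom.snd _ _))

variable {X A B}

@[simp] lemma alphaH_of (g : Wreath X A B) :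
    alphaH X A B (Abelianization.of g) = uu X A B g :=
  Abelianization.lift_apply_of _ _

lemma betaH_apply (m : ↥(FinSuppSubgroup (Quotient (MulAction.orbitRel B X))
    (Abelianization A))) (b : Abelianization B) :
    betaH X A B (m, b) = vMA X A B m * vBA X A B b := rfl

@[simp] lemma vBA_of (b : B) :
    vBA X A B (Abelianization.of b) =
      Abelianization.of (SemidirectProduct.inr b : Wreath X A B) :=
  Abelianization.lift_apply_of _ _

lemma beta_alpha : (betaH X A B).comp (alphaH X A B) = MonoidHom.id _ := by
  apply Abelianization.hom_ext
  have h0 : (alphaH X A B).comp Abelianization.of = uu X A B := by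
    refine MonoidHom.ext fun g => ?_
    exact alphaH_of g
  rw [MonoidHom.comp_assoc, h0, MonoidHom.id_comp]
  apply SemidirectProduct.hom_ext
  · apply hom_ext_sgl
    intro x a
    simp only [MonoidHom.comp_apply]
    rw [uu_inl, betaH_apply, map_one, mul_one, Phi_sgl, vMA_sgl, cAb_of]
    exact of_inl_sgl_orbit (Quotient.out_eq _) a
  · refine MonoidHom.ext fun b => ?_
    simp only [MonoidHom.comp_apply]
    rw [uu_inr, betaH_apply, map_one, one_mul, vBA_of]

lemma alpha_beta : (alphaH X A B).comp (betaH X A B) = MonoidHom.id _ := by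
  have h1 : (alphaH X A B).comp (vMA X A B) = MonoidHom.inl _ _ := by
    apply hom_ext_sgl
    intro y c
    have h2 : ((alphaH X A B).comp (cAb X A B y)) =
        (MonoidHom.inl _ _).comp (sgl y) := by
      apply Abelianization.hom_ext
      refine MonoidHom.ext fun a => ?_
      simp only [MonoidHom.comp_apply]
      rw [cAb_of, alphaH_of, uu_inl, Phi_sgl, Quotient.out_eq]
      rfl
    have h3 := DFunLike.congr_fun h2 c
    simp only [MonoidHom.comp_apply] at h3 ⊢
    rw [vMA_sgl, h3]
  have h4 : (alphaH X A B).comp (vBA X A B) = MonoidHom.inr _ _ := by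
    apply Abelianization.hom_ext
    refine MonoidHom.ext fun b => ?_
    simp only [MonoidHom.comp_apply]
    rw [vBA_of, alphaH_of, uu_inr]
    rfl
  refine MonoidHom.ext fun t => ?_
  obtain ⟨m, b⟩ := t
  have h5 := DFunLike.congr_fun h1 m
  have h6 := DFunLike.congr_fun h4 b
  simp only [MonoidHom.comp_apply] at h5 h6
  simp only [MonoidHom.comp_apply, MonoidHom.id_apply, betaH_apply, map_mul, h5, h6]
  simp [Prod.ext_iff]

variable (X A B)

/-- The abelianization of the wreath product. -/
noncomputable def isoW : Abelianization (Wreath X A B) ≃*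
    (↥(FinSuppSubgroup (Quotient (MulAction.orbitRel B X)) (Abelianization A))
      × Abelianization B) :=
  MonoidHom.toMulEquiv (alphaH X A B) (betaH X A B) (beta_alpha) (alpha_beta)

end W2

end W

end AbW

/-- **Abelianisation of a permutational wreath product.**
If `X` is a `B`-set with no singleton orbit, then the abelianisation of
`G = A ≀_X B` is `(Aᵃᵇ)^{(Y)} × Bᵃᵇ` where `Y = B\X` is the orbit set; in
particular when the orbit set is finite and `X` is nonempty, `Gᵃᵇ` is finite
iff both `Aᵃᵇ` and `Bᵃᵇ` are finite. -/


theorem abelianization_wreath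
    {X A B : Type*} [Group A] [Group B] [MulAction B X]
    (horb : ∀ x : X, ∃ b : B, b • x ≠ x) :
    Nonempty (Abelianization (Wreath X A B) ≃*
      ↥(FinSuppSubgroup (Quotient (MulAction.orbitRel B X)) (Abelianization A))
        × Abelianization B) ∧
    (Finite (Quotient (MulAction.orbitRel B X)) → Nonempty X →
      (Finite (Abelianization (Wreath X A B)) ↔
        Finite (Abelianization A) ∧ Finite (Abelianization B))) := by
  refine ⟨⟨AbW.isoW X A B⟩, fun hY hX => ?_⟩
  obtain ⟨x0⟩ := hX
  constructor
  · intro hfin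
    haveI := hfin
    haveI hT : Finite
        (↥(FinSuppSubgroup (Quotient (MulAction.orbitRel B X)) (Abelianization A))
          × Abelianization B) :=
      Finite.of_equiv _ (AbW.isoW X A B).toEquiv
    haveI hM : Finite
        ↥(FinSuppSubgroup (Quotient (MulAction.orbitRel B X)) (Abelianization A)) :=
      Finite.of_injective
        (fun m => ((m, 1) :
          ↥(FinSuppSubgroup (Quotient (MulAction.orbitRel B X)) (Abelianization A))
            × Abelianization B))
        (fun a b h => by simpa using congrArg Prod.fst h)
    constructor
    · refine Finite.of_injective
        (fun c => (AbW.sgl (Quotient.mk (MulAction.orbitRel B X) x0) c :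
          ↥(FinSuppSubgroup (Quotient (MulAction.orbitRel B X)) (Abelianization A))))
        (fun a b h => ?_)
      have h2 := congrFun (congrArg Subtype.val h) (Quotient.mk (MulAction.orbitRel B X) x0)
      simpa using h2
    · exact Finite.of_injective
        (fun b => ((1, b) :
          ↥(FinSuppSubgroup (Quotient (MulAction.orbitRel B X)) (Abelianization A))
            × Abelianization B))
        (fun a b h => by simpa using congrArg Prod.snd h)
  · rintro ⟨h1, h2⟩
    haveI := h1
    haveI := h2
    haveI := hY
    haveI : Finite (Quotient (MulAction.orbitRel B X) → Abelianization A) :=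
      Pi.finite
    haveI : Finite
        ↥(FinSuppSubgroup (Quotient (MulAction.orbitRel B X)) (Abelianization A)) :=
      Subtype.finite
    exact Finite.of_equiv _ (AbW.isoW X A B).symm.toEquiv
end

section
/- Let G be a group and let N_1, N_2 be normal subgroups of G neither of which contains a nonabelian free subgroup. Then the normal subgroup N_1 N_2 contains no nonabelian free subgroup. Consequently G possesses a largest normal subgroup NF(G) containing no nonabelian free subgroup. -/
/-- A subgroup `N ≤ G` contains a nonabelian free subgroup, i.e. there is an
embedding of the free group of rank 2 into `G` with image inside `N`. -/
def ContainsFreeRankTwo {G : Type*} [Group G] (N : Subgroup G) : Prop :=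
  ∃ f : FreeGroup (Fin 2) →* G, Function.Injective f ∧ f.range ≤ N


open Subgroup

namespace NFAux

noncomputable section

variable {α : Type*}

/-- The exponent-sum (abelianization) homomorphism. -/
def expSum (α : Type*) : FreeGroup α →* Multiplicative (α →₀ ℤ) :=
  FreeGroup.lift fun s => Multiplicative.ofAdd (Finsupp.single s 1)

@[simp] lemma expSum_of (s : α) :
    expSum α (FreeGroup.of s) = Multiplicative.ofAdd (Finsupp.single s 1) := by
  simp [expSum]

lemma expSum_zpow (x : FreeGroup α) (n : ℤ) :
    Multiplicative.toAdd (expSum α (x ^ n)) = n • Multiplicative.toAdd (expSum α x) := by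
  rw [map_zpow]
  exact toAdd_zpow _ _

lemma of_zpow_eq_one (s : α) {n : ℤ} (h : (FreeGroup.of s) ^ n = 1) : n = 0 := by
  have h1 := congrArg (fun w => Multiplicative.toAdd (expSum α w)) h
  simp only [expSum_zpow, expSum_of, map_one] at h1
  have h2 := congrArg (fun f : α →₀ ℤ => f s) h1
  simp [Finsupp.single_apply] at h2
  exact h2

lemma not_commute_of {s t : α} (hst : s ≠ t) :
    ¬ Commute (FreeGroup.of s) (FreeGroup.of t) := by
  classical
  intro hc
  have h := congrArg (FreeGroup.lift
    (fun u => if u = s then Equiv.swap (0:Fin 3) 1 else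
      if u = t then Equiv.swap (1:Fin 3) 2 else 1)) hc
  simp only [map_mul, FreeGroup.lift_apply_of] at h
  rw [if_neg hst, if_neg (Ne.symm hst)] at h
  simp only [if_true] at h
  revert h
  decide

/-- A free group over a subsingleton type is cyclic, with a generator all of whose
torsion is trivial. -/
lemma cyclic_of_subsingleton [Subsingleton α] :
    ∃ c : FreeGroup α, (∀ x : FreeGroup α, x ∈ zpowers c) ∧
      (∀ m : ℤ, c ^ m = 1 → c = 1 ∨ m = 0) := by
  rcases isEmpty_or_nonempty α with h | h
  · refine ⟨1, fun x => ?_, fun m _ => Or.inl rfl⟩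
    induction x using FreeGroup.induction_on with
    | C1 => exact one_mem _
    | of y => exact h.elim y
    | inv_of y _ => exact h.elim y
    | mul y z hy hz => exact mul_mem hy hz
  · obtain ⟨t⟩ := h
    refine ⟨FreeGroup.of t, fun x => ?_, fun m hm => Or.inr (of_zpow_eq_one t hm)⟩
    induction x using FreeGroup.induction_on with
    | C1 => exact one_mem _
    | of y => rw [Subsingleton.elim y t]; exact mem_zpowers _
    | inv_of y _ => rw [Subsingleton.elim y t]; exact inv_mem (mem_zpowers _)
    | mul y z hy hz => exact mul_mem hy hz

/-- A commutative free group is cyclic with a torsion-free-ish generator. -/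
lemma cyclic_of_comm {H : Type*} [Group H] [IsFreeGroup H]
    (hc : ∀ a b : H, Commute a b) :
    ∃ c : H, (∀ x : H, x ∈ zpowers c) ∧ (∀ m : ℤ, c ^ m = 1 → c = 1 ∨ m = 0) := by
  obtain ⟨ι, ⟨b⟩⟩ := IsFreeGroup.nonempty_basis (G := H)
  set e : H ≃* FreeGroup ι := b.repr with he
  have hsub : Subsingleton ι := by
    by_contra hns
    rw [not_subsingleton_iff_nontrivial] at hns
    obtain ⟨s, t, hst⟩ := hns
    refine not_commute_of hst ?_
    have := hc (e.symm (FreeGroup.of s)) (e.symm (FreeGroup.of t))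
    have h2 := congrArg e this
    simpa [Commute, SemiconjBy] using h2
  obtain ⟨c₀, hc₀, hc₀'⟩ := cyclic_of_subsingleton (α := ι)
  refine ⟨e.symm c₀, fun x => ?_, fun m hm => ?_⟩
  · obtain ⟨k, hk⟩ := hc₀ (e x)
    exact ⟨k, by simpa using congrArg e.symm hk⟩
  · have : c₀ ^ m = 1 := by
      have := congrArg e hm
      simpa using this
    rcases hc₀' m this with h | h
    · exact Or.inl (by simp [h])
    · exact Or.inr h

lemma commute_mem_closure {G : Type*} [Group G] {a b : G} (h : Commute a b) :
    ∀ x ∈ closure ({a, b} : Set G), ∀ y ∈ closure ({a, b} : Set G), Commute x y := by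
  have key : ∀ x ∈ closure ({a, b} : Set G), Commute a x ∧ Commute b x := by
    intro x hx
    induction hx using closure_induction with
    | mem z hz =>
      rcases hz with rfl | rfl
      · exact ⟨Commute.refl _, h.symm⟩
      · exact ⟨h, Commute.refl _⟩
    | one => exact ⟨Commute.one_right _, Commute.one_right _⟩
    | mul u v hu hv ihu ihv => exact ⟨ihu.1.mul_right ihv.1, ihu.2.mul_right ihv.2⟩
    | inv u hu ihu => exact ⟨ihu.1.inv_right, ihu.2.inv_right⟩
  intro x hx y hy
  induction hy using closure_induction with
  | mem z hz =>
    rcases hz with rfl | rfl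
    · exact ((key x hx).1).symm
    · exact ((key x hx).2).symm
  | one => exact Commute.one_right _
  | mul u v hu hv ihu ihv => exact ihu.mul_right ihv
  | inv u hu ihu => exact ihu.inv_right

/-- In a free group, two commuting elements lie in a common cyclic subgroup. -/
lemma exists_common_zpowers {H : Type*} [Group H] [IsFreeGroup H] {a b : H}
    (h : Commute a b) : ∃ c : H, a ∈ zpowers c ∧ b ∈ zpowers c := by
  set K : Subgroup H := closure {a, b} with hK
  have ha : a ∈ K := subset_closure (by simp)
  have hb : b ∈ K := subset_closure (by simp)
  have hcomm : ∀ x y : K, Commute x y := by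
    intro x y
    have := commute_mem_closure h x x.2 y y.2
    exact Subtype.ext (by simpa [Commute, SemiconjBy] using this)
  obtain ⟨c, hc, -⟩ := cyclic_of_comm hcomm
  refine ⟨(c : H), ?_, ?_⟩
  · obtain ⟨k, hk⟩ := hc ⟨a, ha⟩
    exact ⟨k, by simpa using congrArg (Subtype.val) hk⟩
  · obtain ⟨k, hk⟩ := hc ⟨b, hb⟩
    exact ⟨k, by simpa using congrArg (Subtype.val) hk⟩

/-- Free groups are torsion-free. -/
lemma zpow_eq_one_iff {H : Type*} [Group H] [IsFreeGroup H] {x : H} (hx : x ≠ 1)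
    {n : ℤ} (h : x ^ n = 1) : n = 0 := by
  set Z : Subgroup H := zpowers x with hZ
  have hxZ : x ∈ Z := mem_zpowers x
  have hcomm : ∀ a b : Z, Commute a b := by
    rintro ⟨a, k, rfl⟩ ⟨b, l, rfl⟩
    exact Subtype.ext (by simpa [Commute, SemiconjBy] using (Commute.zpow_zpow_self x k l))
  obtain ⟨c, hc, hc'⟩ := cyclic_of_comm hcomm
  obtain ⟨k, hk⟩ := hc ⟨x, hxZ⟩
  have hcx : (c : H) ^ k = x := by simpa using congrArg (Subtype.val) hk
  have hkn : c ^ (k * n) = 1 := by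
    have : ((c : H) ^ k) ^ n = 1 := by rw [hcx]; exact h
    have : (c : H) ^ (k * n) = 1 := by rwa [← zpow_mul] at this
    exact Subtype.ext (by simpa using this)
  rcases hc' (k * n) hkn with h1 | h1
  · exfalso
    apply hx
    rw [← hcx]
    have : (c : H) = 1 := by simpa using congrArg (Subtype.val) h1
    simp [this]
  · rcases mul_eq_zero.mp h1 with h2 | h2
    · exfalso
      apply hx
      rw [← hcx, h2, zpow_zero]
    · exact h2

/-- A free group with a nontrivial central element is commutative. -/
lemma comm_of_central {H : Type*} [Group H] [IsFreeGroup H] {z : H} (hz : z ≠ 1)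
    (hcen : ∀ h : H, Commute z h) (a b : H) : Commute a b := by
  obtain ⟨ι, ⟨bb⟩⟩ := IsFreeGroup.nonempty_basis (G := H)
  set e : H ≃* FreeGroup ι := bb.repr with he
  rcases subsingleton_or_nontrivial ι with hsub | hnt
  · -- commutative
    obtain ⟨c₀, hc₀, -⟩ := cyclic_of_subsingleton (α := ι)
    obtain ⟨k, hk⟩ := hc₀ (e a)
    obtain ⟨l, hl⟩ := hc₀ (e b)
    have : Commute (e a) (e b) := by rw [← hk, ← hl]; exact Commute.zpow_zpow_self c₀ k l
    have h2 := congrArg e.symm this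
    simpa [Commute, SemiconjBy] using h2
  · exfalso
    obtain ⟨s, t, hst⟩ := hnt.exists_pair_ne
    have hz'1 : e z ≠ 1 := by
      intro hh
      exact hz (by simpa using congrArg e.symm hh)
    have hzpow : ∀ u : ι, ∃ p : ℤ, (FreeGroup.of u) ^ p = e z := by
      intro u
      have hcom : Commute (e z) (FreeGroup.of u) := by
        have := hcen (e.symm (FreeGroup.of u))
        have h2 := congrArg e this.eq
        simpa [Commute, SemiconjBy] using h2
      obtain ⟨c, ⟨p, hp⟩, ⟨q, hq⟩⟩ := exists_common_zpowers hcom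
      have hp : c ^ p = e z := hp
      have hq : c ^ q = FreeGroup.of u := hq
      -- q = ±1 via exponent sums
      have hq1 : q * (Multiplicative.toAdd (expSum ι c)) u = 1 := by
        have := congrArg (fun w => Multiplicative.toAdd (expSum ι w) u) hq
        simpa [expSum_zpow, Finsupp.single_apply] using this
      have hqu : IsUnit q := IsUnit.of_mul_eq_one _ hq1
      rcases Int.isUnit_iff.mp hqu with rfl | rfl
      · refine ⟨p, ?_⟩
        rw [zpow_one] at hq
        rw [← hq, hp]
      · refine ⟨-p, ?_⟩
        have hc' : c = (FreeGroup.of u)⁻¹ := by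
          rw [← hq]; simp
        rw [← hp, hc']
        simp [zpow_neg, inv_zpow]
    obtain ⟨p, hp⟩ := hzpow s
    obtain ⟨q, hq⟩ := hzpow t
    have hqs : q = 0 := by
      have := congrArg (fun w => Multiplicative.toAdd (expSum ι w) t) (hp.trans hq.symm)
      simpa [expSum_zpow, Finsupp.single_apply, hst, Ne.symm hst, eq_comm] using this
    exact hz'1 (by rw [← hq, hqs, zpow_zero])

/-- The centralizer of a nontrivial element of a free group is commutative. -/
lemma commute_of_commute_commute {H : Type*} [Group H] [IsFreeGroup H] {z u v : H}
    (hz : z ≠ 1) (h1 : Commute z u) (h2 : Commute z v) : Commute u v := by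
  set C : Subgroup H := centralizer {z} with hC
  have hzC : z ∈ C := by
    rw [mem_centralizer_iff]
    rintro g ⟨rfl⟩
    rfl
  have huC : u ∈ C := by
    rw [mem_centralizer_iff]
    rintro g ⟨rfl⟩
    exact h1.eq
  have hvC : v ∈ C := by
    rw [mem_centralizer_iff]
    rintro g ⟨rfl⟩
    exact h2.eq
  have hzC1 : (⟨z, hzC⟩ : C) ≠ 1 := by
    intro hh
    exact hz (by simpa using congrArg Subtype.val hh)
  have hcen : ∀ h : C, Commute (⟨z, hzC⟩ : C) h := by
    rintro ⟨h, hh⟩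
    have := hh z rfl
    exact Subtype.ext (by simpa [Commute, SemiconjBy] using this)
  have := comm_of_central hzC1 hcen ⟨u, huC⟩ ⟨v, hvC⟩
  simpa [Commute, SemiconjBy] using congrArg Subtype.val this.eq

/-- An injective homomorphism of the free group of rank 2 into any free group containing
two non-commuting elements. -/
lemma exists_injective_of_not_commute {H : Type*} [Group H] [IsFreeGroup H] {a b : H}
    (hab : ¬ Commute a b) :
    ∃ g : FreeGroup (Fin 2) →* H, Function.Injective g := by
  classical
  obtain ⟨ι, ⟨bb⟩⟩ := IsFreeGroup.nonempty_basis (G := H)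
  set e : H ≃* FreeGroup ι := bb.repr with he
  have hnt : Nontrivial ι := by
    rcases subsingleton_or_nontrivial ι with hsub | hnt
    · exfalso
      obtain ⟨c₀, hc₀, -⟩ := cyclic_of_subsingleton (α := ι)
      obtain ⟨k, hk⟩ := hc₀ (e a)
      obtain ⟨l, hl⟩ := hc₀ (e b)
      have : Commute (e a) (e b) := by rw [← hk, ← hl]; exact Commute.zpow_zpow_self c₀ k l
      exact hab (by simpa [Commute, SemiconjBy] using congrArg e.symm this.eq)
    · exact hnt
  obtain ⟨s, t, hst⟩ := hnt.exists_pair_ne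
  set ι2 : Fin 2 → ι := fun i => if i = 0 then s else t with hι2
  set r : ι → Fin 2 := fun u => if u = s then 0 else 1 with hr
  have hri : ∀ i, r (ι2 i) = i := by
    intro i
    fin_cases i <;> simp [hι2, hr, hst, Ne.symm hst]
  have hinj : Function.Injective (FreeGroup.map ι2) := by
    intro x y hxy
    have := congrArg (FreeGroup.map r) hxy
    rwa [FreeGroup.map.comp, FreeGroup.map.comp,
      (by funext i; exact hri i : r ∘ ι2 = id), FreeGroup.map.id, FreeGroup.map.id] at this
  exact ⟨e.symm.toMonoidHom.comp (FreeGroup.map ι2),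
    e.symm.injective.comp hinj⟩

end

end NFAux

namespace NFAux

lemma sq_ne : (FreeGroup.of (0:Fin 2) * FreeGroup.of 0) * (FreeGroup.of 1 * FreeGroup.of 1) ≠
    (FreeGroup.of (1:Fin 2) * FreeGroup.of 1) * (FreeGroup.of 0 * FreeGroup.of 0) := by
  decide

/-- A nontrivial normal subgroup of the free group of rank two contains a copy of the
free group of rank two. -/
lemma normal_subgroup_free2 (K : Subgroup (FreeGroup (Fin 2))) (hn : K.Normal) (hne : K ≠ ⊥) :
    ∃ g : FreeGroup (Fin 2) →* FreeGroup (Fin 2), Function.Injective g ∧ g.range ≤ K := by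
  by_cases hcomm : ∀ a b : K, Commute a b
  · exfalso
    obtain ⟨c, hc, -⟩ := cyclic_of_comm hcomm
    set κ : FreeGroup (Fin 2) := (c : FreeGroup (Fin 2)) with hκ
    have hκ1 : κ ≠ 1 := by
      obtain ⟨a, ha⟩ := Subgroup.ne_bot_iff_exists_ne_one.mp hne
      obtain ⟨k, hk⟩ := hc a
      intro hh
      apply ha
      have : (c : FreeGroup (Fin 2)) ^ k = (a : FreeGroup (Fin 2)) := by
        simpa using congrArg Subtype.val hk
      apply Subtype.ext
      rw [← this, ← hκ, hh]
      simp
    have key : ∀ g : FreeGroup (Fin 2), Commute κ (g * g) := by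
      intro g
      have hm : g * κ * g⁻¹ ∈ K := hn.conj_mem κ c.2 g
      have hn' : g⁻¹ * κ * g ∈ K := by
        have := hn.conj_mem κ c.2 g⁻¹
        simpa using this
      obtain ⟨m, hm'⟩ := hc ⟨_, hm⟩
      obtain ⟨n, hn''⟩ := hc ⟨_, hn'⟩
      have hm' : κ ^ m = g * κ * g⁻¹ := by simpa [← hκ] using congrArg Subtype.val hm'
      have hn'' : κ ^ n = g⁻¹ * κ * g := by simpa [← hκ] using congrArg Subtype.val hn''
      have hmn : κ ^ (n * m) = κ := by
        have : g⁻¹ * (g * κ * g⁻¹) * g = κ := by group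
        calc κ ^ (n * m) = (κ ^ n) ^ m := by rw [zpow_mul]
        _ = (g⁻¹ * κ * g) ^ m := by rw [hn'']
        _ = g⁻¹ * κ ^ m * g := by
            have := (map_zpow (MulAut.conj g⁻¹) κ m).symm
            simpa [MulAut.conj_apply] using this
        _ = g⁻¹ * (g * κ * g⁻¹) * g := by rw [hm']
        _ = κ := this
      have hnm1 : n * m = 1 := by
        have h1 : κ ^ (n * m - 1) = 1 := by
          rw [zpow_sub, hmn, zpow_one, mul_inv_cancel]
        have := zpow_eq_one_iff hκ1 h1
        omega
      have hm1 : m = 1 ∨ m = -1 := by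
        have : IsUnit m := IsUnit.of_mul_eq_one n (by rw [mul_comm]; exact hnm1)
        exact Int.isUnit_iff.mp this
      have hsq : (g * g) * κ * (g * g)⁻¹ = κ := by
        have h2 : g * (g * κ * g⁻¹) * g⁻¹ = (g * g) * κ * (g * g)⁻¹ := by group
        have h3 : g * κ ^ m * g⁻¹ = (g * κ * g⁻¹) ^ m := by
          have := map_zpow (MulAut.conj g) κ m
          simpa [MulAut.conj_apply] using this
        calc (g * g) * κ * (g * g)⁻¹ = g * (g * κ * g⁻¹) * g⁻¹ := h2.symm
        _ = g * κ ^ m * g⁻¹ := by rw [hm']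
        _ = (g * κ * g⁻¹) ^ m := h3
        _ = (κ ^ m) ^ m := by rw [hm']
        _ = κ ^ (m * m) := by rw [zpow_mul]
        _ = κ := by rcases hm1 with rfl | rfl <;> simp
      show κ * (g * g) = (g * g) * κ
      calc κ * (g * g) = ((g * g) * κ * (g * g)⁻¹) * (g * g) := by rw [hsq]
      _ = (g * g) * κ := by group
    have hcc := commute_of_commute_commute hκ1 (key (FreeGroup.of 0)) (key (FreeGroup.of 1))
    exact sq_ne hcc.eq
  · push_neg at hcomm
    obtain ⟨a, b, hab⟩ := hcomm
    obtain ⟨g, hg⟩ := exists_injective_of_not_commute hab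
    refine ⟨K.subtype.comp g, K.subtype_injective.comp hg, ?_⟩
    rintro _ ⟨w, rfl⟩
    exact (g w).2

/-- The class of normal subgroups without free rank-2 subgroups is closed under joins. -/
lemma sup_no_free {G : Type*} [Group G] (N₁ N₂ : Subgroup G)
    (h₁n : N₁.Normal) (h₂n : N₂.Normal)
    (h₁ : ¬ ContainsFreeRankTwo N₁) (h₂ : ¬ ContainsFreeRankTwo N₂) : ¬ ContainsFreeRankTwo (N₁ ⊔ N₂) := by
  rintro ⟨f, hfinj, hfr⟩
  set K : Subgroup (FreeGroup (Fin 2)) := N₁.comap f with hK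
  haveI : K.Normal := h₁n.comap f
  by_cases hKb : K = ⊥
  · apply h₂
    haveI := h₁n
    set π : G →* G ⧸ N₁ := QuotientGroup.mk' N₁ with hπ
    have hkerπ : π.ker = N₁ := QuotientGroup.ker_mk' N₁
    have hker : (π.comp f).ker = ⊥ := by
      rw [← MonoidHom.comap_ker, hkerπ, ← hK]
      exact hKb
    have hπf : Function.Injective (π.comp f) := (π.comp f).ker_eq_bot_iff.mp hker
    have hmem : ∀ i : Fin 2, ∃ m : G, m ∈ N₂ ∧ π m = π (f (FreeGroup.of i)) := by
      intro i
      have h1 : f (FreeGroup.of i) ∈ N₁ ⊔ N₂ := hfr ⟨FreeGroup.of i, rfl⟩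
      have h2 : π (f (FreeGroup.of i)) ∈ (N₁ ⊔ N₂).map π :=
        Subgroup.mem_map_of_mem _ h1
      rw [Subgroup.map_sup] at h2
      have h3 : N₁.map π = ⊥ := by
        rw [eq_bot_iff]
        rintro _ ⟨x, hx, rfl⟩
        simp only [Subgroup.mem_bot]
        rw [hπ]
        simpa [QuotientGroup.eq_one_iff] using hx
      rw [h3, bot_sup_eq] at h2
      obtain ⟨m, hm, hm2⟩ := h2
      exact ⟨m, hm, hm2⟩
    choose m hmmem hmπ using hmem
    set ψ : FreeGroup (Fin 2) →* G := FreeGroup.lift m with hψ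
    have hcomp : π.comp ψ = π.comp f := by
      apply FreeGroup.ext_hom
      intro i
      simp only [MonoidHom.comp_apply, hψ, FreeGroup.lift_apply_of]
      exact hmπ i
    have hψinj : Function.Injective ψ := by
      intro x y hxy
      apply hπf
      have : π.comp ψ x = π.comp ψ y := by simp only [MonoidHom.comp_apply, hxy]
      rwa [hcomp] at this
    refine ⟨ψ, hψinj, ?_⟩
    rintro _ ⟨w, rfl⟩
    induction w using FreeGroup.induction_on with
    | C1 => simpa using N₂.one_mem
    | of x =>
      rw [hψ, FreeGroup.lift_apply_of]
      exact hmmem x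
    | inv_of x hx =>
      rw [map_inv, hψ,
        FreeGroup.lift_apply_of]
      exact N₂.inv_mem (hmmem x)
    | mul x y hx hy => rw [map_mul]; exact N₂.mul_mem hx hy
  · apply h₁
    obtain ⟨g, hg, hgr⟩ := normal_subgroup_free2 K inferInstance hKb
    refine ⟨f.comp g, hfinj.comp hg, ?_⟩
    rintro _ ⟨w, rfl⟩
    have : g w ∈ K := hgr ⟨w, rfl⟩
    exact Subgroup.mem_comap.mp this

lemma not_cfrt_bot {G : Type*} [Group G] : ¬ ContainsFreeRankTwo (⊥ : Subgroup G) := by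
  rintro ⟨f, hinj, hr⟩
  have h0 : f (FreeGroup.of 0) = 1 := by
    have := hr ⟨FreeGroup.of 0, rfl⟩
    simpa [Subgroup.mem_bot] using this
  have : FreeGroup.of (0 : Fin 2) = 1 := hinj (by simpa using h0)
  have h1 : (FreeGroup.of (0 : Fin 2)) ^ (1 : ℤ) = 1 := by simpa using this
  simpa using of_zpow_eq_one (0 : Fin 2) h1

end NFAux


/-- **The largest normal subgroup without nonabelian free subgroups.**
If `N₁, N₂` are normal subgroups of `G` neither of which contains a
nonabelian free subgroup, then `N₁N₂ = N₁ ⊔ N₂` contains no nonabelian free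
subgroup; consequently `G` has a largest normal subgroup `NF(G)` with no
nonabelian free subgroup. -/
theorem product_no_free_and_NF_exists
    {G : Type*} [Group G] (N₁ N₂ : Subgroup G)
    (h₁n : N₁.Normal) (h₂n : N₂.Normal)
    (h₁ : ¬ ContainsFreeRankTwo N₁) (h₂ : ¬ ContainsFreeRankTwo N₂) :
    ¬ ContainsFreeRankTwo (N₁ ⊔ N₂) ∧
    ∃ M : Subgroup G, M.Normal ∧ ¬ ContainsFreeRankTwo M ∧
      ∀ N : Subgroup G, N.Normal → ¬ ContainsFreeRankTwo N → N ≤ M := by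
  constructor
  · exact NFAux.sup_no_free N₁ N₂ h₁n h₂n h₁ h₂
  · set s : Set (Subgroup G) := {N | N.Normal ∧ ¬ ContainsFreeRankTwo N} with hs
    have hbot : (⊥ : Subgroup G) ∈ s := ⟨inferInstance, NFAux.not_cfrt_bot⟩
    have hdir : DirectedOn (· ≤ ·) s := by
      rintro a ⟨han, haf⟩ b ⟨hbn, hbf⟩
      haveI := han; haveI := hbn
      exact ⟨a ⊔ b, ⟨Subgroup.sup_normal a b, NFAux.sup_no_free a b han hbn haf hbf⟩,
        le_sup_left, le_sup_right⟩
    refine ⟨sSup s, ?_, ?_, ?_⟩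
    · constructor
      intro x hx g
      rw [Subgroup.mem_sSup_of_directedOn ⟨⊥, hbot⟩ hdir] at hx ⊢
      obtain ⟨N, hN, hxN⟩ := hx
      exact ⟨N, hN, hN.1.conj_mem x hxN g⟩
    · rintro ⟨f, hinj, hr⟩
      have h0 : f (FreeGroup.of 0) ∈ sSup s := hr ⟨_, rfl⟩
      have h1 : f (FreeGroup.of 1) ∈ sSup s := hr ⟨_, rfl⟩
      rw [Subgroup.mem_sSup_of_directedOn ⟨⊥, hbot⟩ hdir] at h0 h1
      obtain ⟨N₃, hN₃, h₃⟩ := h0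
      obtain ⟨N₄, hN₄, h₄⟩ := h1
      obtain ⟨N₅, hN₅, h₃₅, h₄₅⟩ := hdir N₃ hN₃ N₄ hN₄
      apply hN₅.2
      refine ⟨f, hinj, ?_⟩
      rintro _ ⟨w, rfl⟩
      induction w using FreeGroup.induction_on with
      | C1 => simpa using N₅.one_mem
      | of x =>
        fin_cases x
        · exact h₃₅ h₃
        · exact h₄₅ h₄
      | inv_of x hx => rw [map_inv]; exact N₅.inv_mem hx
      | mul x y hx hy => rw [map_mul]; exact N₅.mul_mem hx hy
    · intro N hn hnf
      exact le_sSup ⟨hn, hnf⟩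
end

section
/- Let 1 → A → G → B → 1 be a short exact sequence of groups where A contains no nonabelian free subgroup. If G splits as a non-trivial amalgamated free product G = H ∗_K L which is non-degenerate (it is not the case that K has index 2 in both H and L), then A ≤ K, and hence B ≅ G/A splits as the non-trivial amalgam (H/A) ∗_{K/A} (L/A). -/
/-- `G` is the (internal) amalgam `H ∗_K L` of two of its subgroups along
`K = H ⊓ L`: `H ∪ L` generates `G` and every reduced word (an alternating
product, of length ≥ 2, of elements of `H \ K` and `L \ K`) is nontrivial. -/
def IsAmalgamOf {G : Type*} [Group G] (H L : Subgroup G) : Prop :=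
  Subgroup.closure ((H : Set G) ∪ (L : Set G)) = ⊤ ∧
  ∀ (n : ℕ) (g : Fin (n + 2) → G) (side : Fin (n + 2) → Bool),
    (∀ i, g i ∈ (cond (side i) H L) ∧ g i ∉ H ⊓ L) →
    (∀ i : Fin (n + 1), side i.castSucc ≠ side i.succ) →
    (List.ofFn g).prod ≠ 1

namespace AmalgamAux

open List

variable {G : Type*} [Group G]

/-- Reduced word for the amalgam `H ∗_{H⊓L} L`. -/
def Lred (H L : Subgroup G) (l : List G) : Prop :=
  (∀ x ∈ l, (x ∈ H ∨ x ∈ L) ∧ x ∉ H ⊓ L) ∧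
    l.Chain' (fun p q => ¬(p ∈ H ↔ q ∈ H))

variable {H L : Subgroup G}

lemma Lred.tail {u : G} {t : List G} (h : Lred H L (u :: t)) : Lred H L t :=
  ⟨fun x hx => h.1 x (mem_cons_of_mem _ hx), (List.isChain_cons.1 h.2).2⟩

lemma Lred.letter {l : List G} (h : Lred H L l) {x : G} (hx : x ∈ l) :
    (x ∈ H ∨ x ∈ L) ∧ x ∉ H ⊓ L := h.1 x hx

lemma Lred.mem_L {l : List G} (h : Lred H L l) {x : G} (hx : x ∈ l) (hxH : x ∉ H) : x ∈ L :=
  ((h.1 x hx).1).resolve_left hxH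

/-- Convert a reduced list to the `Fin`-indexed form and apply the amalgam axiom. -/
lemma lred_prod_ne_one (hamal : IsAmalgamOf H L) {l : List G}
    (hl : Lred H L l) (hne : l ≠ []) : l.prod ≠ 1 := by
  classical
  match l, hne with
  | [x], _ =>
    intro hx
    simp only [prod_cons, prod_nil, mul_one] at hx
    exact (hl.1 x (mem_cons_self)).2 (hx ▸ (H ⊓ L).one_mem)
  | x :: y :: t, _ =>
    obtain ⟨n, hn⟩ : ∃ n, (x :: y :: t).length = n + 2 := ⟨t.length, by simp⟩
    set l : List G := x :: y :: t with hldef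
    have hlen : l.length = n + 2 := hn
    set g : Fin (n + 2) → G := fun i => l.getD i 1 with hg
    have hget : ∀ (i : ℕ) (hi : i < n + 2), g ⟨i, hi⟩ = l[i]'(by rw [hlen]; omega) := by
      intro i hi
      have hi' : i < l.length := by rw [hlen]; omega
      simp [hg, List.getD_eq_getElem?_getD, List.getElem?_eq_getElem hi']
    have hofn : List.ofFn g = l := by
      apply List.ext_getElem (by simp [hlen])
      intro i h1 h2
      have hi : i < n + 2 := by simp at h1; omega
      simp only [List.getElem_ofFn]
      rw [hget i hi]
    set side : Fin (n + 2) → Bool := fun i => decide (g i ∈ H) with hside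
    intro hprod
    refine hamal.2 n g side ?_ ?_ (by rw [hofn]; exact hprod)
    · intro i
      have hmem : g i ∈ l := by
        rw [show g i = g ⟨(i : ℕ), i.2⟩ from rfl, hget (i : ℕ) i.2]
        exact List.getElem_mem _
      refine ⟨?_, (hl.1 _ hmem).2⟩
      by_cases hH : g i ∈ H
      · simp [hside, hH]
      · have : side i = false := by simp [hside, hH]
        rw [this]
        exact hl.mem_L hmem hH
    · intro i
      have hi : (i : ℕ) < l.length - 1 := by
        have := i.2; rw [hlen]; omega
      have hrel := List.isChain_iff_getElem.1 hl.2 i (by omega)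
      have hgc : g i.castSucc = l.get ⟨(i : ℕ), by rw [hlen]; omega⟩ := by
        rw [show g i.castSucc = g ⟨(i : ℕ), by omega⟩ from rfl, hget (i : ℕ) (by omega)]
        simp [List.get_eq_getElem]
      have hgs : g i.succ = l.get ⟨(i : ℕ) + 1, by rw [hlen]; omega⟩ := by
        rw [show g i.succ = g ⟨(i : ℕ) + 1, by omega⟩ from rfl, hget ((i : ℕ) + 1) (by omega)]
        simp [List.get_eq_getElem]
      simp only [hside, Ne, decide_eq_decide, hgc, hgs]
      exact hrel

/-- The product of a nonempty reduced word is not in `H ⊓ L`. -/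
lemma lred_prod_notin (hamal : IsAmalgamOf H L) {l : List G}
    (hl : Lred H L l) (hne : l ≠ []) : l.prod ∉ H ⊓ L := by
  intro hmem
  match l, hne with
  | u :: t, _ =>
    obtain ⟨p, hp⟩ : ∃ p : G, p = (u :: t).prod := ⟨_, rfl⟩
    rw [← hp] at hmem
    have hpH : p⁻¹ ∈ H := (inv_mem hmem).1
    have hpL : p⁻¹ ∈ L := (inv_mem hmem).2
    have hprod : ((p⁻¹ * u) :: t).prod = 1 := by
      rw [List.prod_cons, mul_assoc, ← List.prod_cons, ← hp]
      simp
    have hside : ∀ x : G, (p⁻¹ * x ∈ H ↔ x ∈ H) :=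
      fun x => mul_mem_cancel_left hpH
    have hsideL : ∀ x : G, (p⁻¹ * x ∈ L ↔ x ∈ L) :=
      fun x => mul_mem_cancel_left hpL
    have hred : Lred H L ((p⁻¹ * u) :: t) := by
      obtain ⟨hu1, hu2⟩ := hl.letter (List.mem_cons_self)
      refine ⟨?_, ?_⟩
      · intro x hx
        rcases List.mem_cons.1 hx with rfl | hx
        · refine ⟨hu1.imp (fun h => (hside u).2 h) (fun h => (hsideL u).2 h), fun hK => ?_⟩
          exact hu2 ⟨(hside u).1 hK.1, (hsideL u).1 hK.2⟩
        · exact hl.letter (List.mem_cons_of_mem _ hx)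
      · refine List.isChain_cons.2 ⟨?_, (List.isChain_cons.1 hl.2).2⟩
        intro y hy
        have := (List.isChain_cons.1 hl.2).1 y hy
        simpa [hside u] using this
    exact lred_prod_ne_one hamal hred (by simp) hprod

/-- inverse-reverse of a word -/
def invr (l : List G) : List G := (l.map fun x => x⁻¹).reverse

lemma invr_prod (l : List G) : (invr l).prod = l.prod⁻¹ := (List.prod_inv_reverse l).symm

lemma Lred.invr {l : List G} (hl : Lred H L l) : Lred H L (AmalgamAux.invr l) := by
  constructor
  · intro x hx
    simp only [AmalgamAux.invr, List.mem_reverse, List.mem_map] at hx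
    obtain ⟨y, hy, rfl⟩ := hx
    obtain ⟨h1, h2⟩ := hl.letter hy
    exact ⟨h1.imp (fun h => H.inv_mem h) (fun h => L.inv_mem h),
      fun hK => h2 ⟨H.inv_mem_iff.1 hK.1, L.inv_mem_iff.1 hK.2⟩⟩
  · rw [AmalgamAux.invr, List.Chain', List.isChain_reverse]
    rw [List.isChain_map]
    refine hl.2.imp ?_
    intro a b hab
    rw [inv_mem_iff (x := b), inv_mem_iff (x := a)]
    exact fun h => hab (iff_comm.1 h)

lemma invr_concat (b e : G) (mid : List G) :
    invr (b :: (mid ++ [e])) = e⁻¹ :: (invr mid ++ [b⁻¹]) := by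
  simp [invr]

/-- The key concatenation-with-single-merge lemma: prepend a reduced block
`b :: mid ++ [e]` to a reduced word `u :: t`, when the junction `e, u` either
changes side or merges to a non-`K` letter. -/
lemma prepend {b e u : G} {mid t : List G}
    (hB : Lred H L (b :: (mid ++ [e]))) (ht : Lred H L (u :: t))
    (hj : (¬(e ∈ H ↔ u ∈ H)) ∨ ((e ∈ H ↔ u ∈ H) ∧ e * u ∉ H ⊓ L)) :
    ∃ t', Lred H L (b :: t') ∧
      (b :: t').prod = (b :: (mid ++ [e])).prod * (u :: t).prod := by
  have heB : e ∈ b :: (mid ++ [e]) := by simp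
  have huT : u ∈ u :: t := List.mem_cons_self
  have hBapp : ((b :: mid) ++ [e]).Chain' (fun p q => ¬(p ∈ H ↔ q ∈ H)) := by
    simpa using hB.2
  obtain ⟨hmidchain, -, hjunc⟩ := List.isChain_append.1 hBapp
  rcases hj with hj | ⟨hiff, hK⟩
  · -- no merge : concatenate
    refine ⟨mid ++ [e] ++ (u :: t), ?_, ?_⟩
    · constructor
      · intro x hx
        rw [show b :: (mid ++ [e] ++ (u :: t)) = (b :: (mid ++ [e])) ++ (u :: t) by simp,
          List.mem_append] at hx
        exact hx.elim (fun h => hB.letter h) (fun h => ht.letter h)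
      · have heq : b :: (mid ++ [e] ++ (u :: t)) = (b :: (mid ++ [e])) ++ (u :: t) := by
          simp
        rw [heq]
        refine List.isChain_append.2 ⟨hB.2, ht.2, ?_⟩
        intro x hx y hy
        have hxl : (b :: (mid ++ [e])).getLast? = some e := by
          rw [show b :: (mid ++ [e]) = (b :: mid) ++ [e] by simp]
          exact List.getLast?_concat
        rw [hxl, Option.mem_some_iff] at hx
        simp only [List.head?_cons, Option.mem_some_iff] at hy
        subst hx; subst hy
        exact hj
    · simp [List.prod_append, List.prod_cons, mul_assoc]
  · -- merge e and u into one letter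
    have hsideu : e * u ∈ H ↔ u ∈ H := by
      constructor
      · intro h
        by_contra hu
        have he : e ∉ H := fun he => hu (hiff.1 he)
        have heL : e ∈ L := hB.mem_L heB he
        have huL : u ∈ L := ht.mem_L huT hu
        exact hK ⟨h, mul_mem heL huL⟩
      · intro hu
        exact mul_mem (hiff.2 hu) hu
    have hsidee : e * u ∈ H ↔ e ∈ H := hsideu.trans hiff.symm
    have hletter : (e * u ∈ H ∨ e * u ∈ L) ∧ e * u ∉ H ⊓ L := by
      refine ⟨?_, hK⟩
      by_cases he : e ∈ H
      · exact Or.inl (mul_mem he (hiff.1 he))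
      · exact Or.inr (mul_mem (hB.mem_L heB he) (ht.mem_L huT (fun hu => he (hiff.2 hu))))
    refine ⟨mid ++ ((e * u) :: t), ?_, ?_⟩
    · constructor
      · intro x hx
        rw [show b :: (mid ++ (e * u) :: t) = (b :: mid) ++ ((e * u) :: t) by simp,
          List.mem_append] at hx
        rcases hx with hx | hx
        · exact hB.letter (by rcases List.mem_cons.1 hx with rfl | hx <;> simp [hx])
        · rcases List.mem_cons.1 hx with rfl | hx
          · exact hletter
          · exact ht.letter (by simp [hx])
      · have heq : b :: (mid ++ (e * u) :: t) = (b :: mid) ++ ((e * u) :: t) := by simp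
        rw [heq]
        refine List.isChain_append.2 ⟨hmidchain, ?_, ?_⟩
        · refine List.isChain_cons.2 ⟨?_, (List.isChain_cons.1 ht.2).2⟩
          intro y hy
          have := (List.isChain_cons.1 ht.2).1 y hy
          simpa [hsideu] using this
        · intro x hx y hy
          simp only [List.head?_cons, Option.mem_some_iff] at hy
          subst hy
          have := hjunc x hx e (by simp)
          simpa [hsidee] using this
    · simp [List.prod_append, List.prod_cons, mul_assoc]

/-- A word fixed by `FreeGroup.reduce` has no adjacent cancelling pair. -/
lemma chain'_of_reduce {α : Type*} [DecidableEq α] :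
    ∀ {l : List (α × Bool)}, FreeGroup.reduce l = l →
      l.Chain' (fun a b => ¬(a.1 = b.1 ∧ a.2 = !b.2))
  | [], _ => List.isChain_nil
  | [x], _ => List.isChain_singleton x
  | x :: y :: t, h => by
    have hred : FreeGroup.Red (y :: t) (FreeGroup.reduce (y :: t)) := FreeGroup.reduce.red
    have hlen : (FreeGroup.reduce (y :: t)).length ≤ (y :: t).length :=
      FreeGroup.Red.length_le hred
    rw [FreeGroup.reduce.cons] at h
    rcases hr : FreeGroup.reduce (y :: t) with - | ⟨hd, tl⟩
    · rw [hr] at h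
      simp at h
    · rw [hr] at h hlen
      replace h : (if x.1 = hd.1 ∧ x.2 = !hd.2 then tl else x :: hd :: tl) = x :: y :: t := h
      by_cases hc : x.1 = hd.1 ∧ x.2 = !hd.2
      · rw [if_pos hc] at h
        have : tl.length = (x :: y :: t).length := by rw [h]
        simp at this hlen
        omega
      · rw [if_neg hc] at h
        have h2 : hd = y ∧ tl = t := by
          have := congrArg List.tail h
          simpa using this
        obtain ⟨rfl, rfl⟩ := h2
        have ih := chain'_of_reduce (show FreeGroup.reduce (hd :: tl) = hd :: tl from hr)
        exact List.isChain_cons_cons.2 ⟨hc, ih⟩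

section PingPong

variable {xa c : G} {F1 F2 Fh : G → Prop}

/-- generators of the free subgroup -/
def phiGen (xa c : G) : Fin 2 → G := ![xa, c * xa * c⁻¹]

/-- letters of the free group on two generators, as elements of `G` -/
def phiLetter (xa c : G) : Fin 2 × Bool → G := fun q =>
  cond q.2 (phiGen xa c q.1) (phiGen xa c q.1)⁻¹

/-- the shape invariant for the ping-pong argument -/
def PP (c : G) (F1 F2 : G → Prop) : Fin 2 × Bool → G → Prop := fun q g =>
  cond q.2 (![F1 g, F1 (c⁻¹ * g)] q.1) (![F2 g, F2 (c⁻¹ * g)] q.1)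

lemma pingpong_aux
    (A1 : F1 xa) (A2 : F2 xa⁻¹) (A3 : Fh c⁻¹)
    (S1 : ∀ g, F1 g → F1 (xa * g)) (S2 : ∀ g, Fh g → F1 (xa * g))
    (S3 : ∀ g, F2 g → F2 (xa⁻¹ * g)) (S4 : ∀ g, Fh g → F2 (xa⁻¹ * g))
    (S5 : ∀ g, F1 g → Fh (c * g)) (S6 : ∀ g, F2 g → Fh (c * g))
    (S7 : ∀ g, F1 g → Fh (c⁻¹ * g)) (S8 : ∀ g, F2 g → Fh (c⁻¹ * g)) :
    ∀ (w : List (Fin 2 × Bool)) (p : Fin 2 × Bool),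
      List.Chain' (fun a b => ¬(a.1 = b.1 ∧ a.2 = !b.2)) (p :: w) →
      PP c F1 F2 p (((p :: w).map (phiLetter xa c)).prod) := by
  intro w
  induction w with
  | nil =>
    rintro ⟨i, s⟩ -
    fin_cases i <;> cases s <;>
      (try simp [PP, phiLetter, phiGen])
    all_goals first
      | exact A1
      | exact A2
      | (convert S2 _ A3 using 1 <;> group <;> done)
      | (convert S4 _ A3 using 1 <;> group <;> done)
  | cons q w' ih =>
    rintro ⟨i, s⟩ hchain
    have hchain' := (List.isChain_cons_cons.1 hchain).2
    have hpq := (List.isChain_cons_cons.1 hchain).1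
    have IH := ih q hchain'
    obtain ⟨j, sj⟩ := q
    have hrest :
        (((i, s) :: (j, sj) :: w').map (phiLetter xa c)).prod
          = phiLetter xa c (i, s) * (((j, sj) :: w').map (phiLetter xa c)).prod := by
      simp
    rw [hrest]
    set r := (((j, sj) :: w').map (phiLetter xa c)).prod with hr
    clear_value r
    fin_cases i <;> cases s <;> fin_cases j <;> cases sj <;>
      (try simp [PP, phiLetter, phiGen] at IH hpq ⊢)
    all_goals first
      | simp at hpq
      | (convert S1 _ IH using 1 <;> group <;> done)
      | (convert S3 _ IH using 1 <;> group <;> done)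
      | (convert S2 _ (S5 _ IH) using 1 <;> group <;> done)
      | (convert S2 _ (S6 _ IH) using 1 <;> group <;> done)
      | (convert S2 _ (S7 _ IH) using 1 <;> group <;> done)
      | (convert S2 _ (S8 _ IH) using 1 <;> group <;> done)
      | (convert S4 _ (S5 _ IH) using 1 <;> group <;> done)
      | (convert S4 _ (S6 _ IH) using 1 <;> group <;> done)
      | (convert S4 _ (S7 _ IH) using 1 <;> group <;> done)
      | (convert S4 _ (S8 _ IH) using 1 <;> group <;> done)

end PingPong

/-- Every element has a normal form: it lies in `H`, in `L`, or is the product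
of a reduced word of length ≥ 2. -/
def HasForm (H L : Subgroup G) (g : G) : Prop :=
  g ∈ H ∨ g ∈ L ∨ ∃ l, Lred H L l ∧ 2 ≤ l.length ∧ l.prod = g

lemma hasForm_two_letter {z w : G} (hz : z ∈ H ∨ z ∈ L) (hw : w ∈ H ∨ w ∈ L) :
    HasForm H L (z * w) := by
  by_cases hzH : z ∈ H <;> by_cases hwH : w ∈ H
  · exact Or.inl (mul_mem hzH hwH)
  · have hwL : w ∈ L := hw.resolve_left hwH
    by_cases hzL : z ∈ L
    · exact Or.inr (Or.inl (mul_mem hzL hwL))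
    · refine Or.inr (Or.inr ⟨[z, w], ⟨?_, ?_⟩, by simp, by simp⟩)
      · rintro x hx
        rcases List.mem_cons.1 hx with rfl | hx
        · exact ⟨Or.inl hzH, fun hK => hzL hK.2⟩
        · rcases List.mem_cons.1 hx with rfl | hx
          · exact ⟨Or.inr hwL, fun hK => hwH hK.1⟩
          · simp at hx
      · simp only [List.Chain', List.isChain_cons_cons, List.isChain_singleton, and_true]
        exact fun h => hwH (h.1 hzH)
  · have hzL : z ∈ L := hz.resolve_left hzH
    by_cases hwL : w ∈ L
    · exact Or.inr (Or.inl (mul_mem hzL hwL))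
    · refine Or.inr (Or.inr ⟨[z, w], ⟨?_, ?_⟩, by simp, by simp⟩)
      · rintro x hx
        rcases List.mem_cons.1 hx with rfl | hx
        · exact ⟨Or.inr hzL, fun hK => hzH hK.1⟩
        · rcases List.mem_cons.1 hx with rfl | hx
          · exact ⟨Or.inl hwH, fun hK => hwL hK.2⟩
          · simp at hx
      · simp only [List.Chain', List.isChain_cons_cons, List.isChain_singleton, and_true]
        exact fun h => hzH (h.2 hwH)
  · exact Or.inr (Or.inl (mul_mem (hz.resolve_left hzH) (hw.resolve_left hwH)))

lemma hasForm_front_letter {z : G} (hz : z ∈ H ∨ z ∈ L) {u : G} {t : List G}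
    (h : Lred H L (u :: t)) (hlen : 2 ≤ (u :: t).length) :
    HasForm H L (z * (u :: t).prod) := by
  obtain ⟨hu, huK⟩ := h.letter (List.mem_cons_self)
  by_cases hzK : z ∈ H ⊓ L
  · -- absorb z into u
    have hsH : z * u ∈ H ↔ u ∈ H := mul_mem_cancel_left hzK.1
    have hsL : z * u ∈ L ↔ u ∈ L := mul_mem_cancel_left hzK.2
    refine Or.inr (Or.inr ⟨(z * u) :: t, ⟨?_, ?_⟩, by simpa using hlen, by
      simp [List.prod_cons, mul_assoc]⟩)
    · rintro x hx
      rcases List.mem_cons.1 hx with rfl | hx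
      · exact ⟨hu.imp hsH.2 hsL.2, fun hK => huK ⟨hsH.1 hK.1, hsL.1 hK.2⟩⟩
      · exact h.letter (List.mem_cons_of_mem _ hx)
    · refine List.isChain_cons.2 ⟨?_, (List.isChain_cons.1 h.2).2⟩
      intro y hy
      have := (List.isChain_cons.1 h.2).1 y hy
      simpa [hsH] using this
  · by_cases hside : z ∈ H ↔ u ∈ H
    · by_cases hmK : z * u ∈ H ⊓ L
      · -- cancellation into K, absorb into the next letter
        cases t with
        | nil => simp at hlen
        | cons u' t' =>
          obtain ⟨hu', hu'K⟩ := h.letter (show u' ∈ u :: u' :: t' by simp)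
          have hprod : z * (u :: u' :: t').prod = (z * u) * (u' :: t').prod := by
            simp [List.prod_cons, mul_assoc]
          rw [hprod]
          have ht' : Lred H L (u' :: t') := h.tail
          cases t' with
          | nil =>
            have : (z * u) * (u' :: ([] : List G)).prod = (z * u) * u' := by simp
            rw [this]
            rcases hu' with h' | h'
            · exact Or.inl (mul_mem hmK.1 h')
            · exact Or.inr (Or.inl (mul_mem hmK.2 h'))
          | cons u'' t'' =>
            have hsH : (z * u) * u' ∈ H ↔ u' ∈ H := mul_mem_cancel_left hmK.1
            have hsL : (z * u) * u' ∈ L ↔ u' ∈ L := mul_mem_cancel_left hmK.2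
            refine Or.inr (Or.inr ⟨((z * u) * u') :: u'' :: t'', ⟨?_, ?_⟩, by simp, by
              simp [List.prod_cons, mul_assoc]⟩)
            · rintro x hx
              rcases List.mem_cons.1 hx with rfl | hx
              · exact ⟨hu'.imp hsH.2 hsL.2, fun hK => hu'K ⟨hsH.1 hK.1, hsL.1 hK.2⟩⟩
              · exact ht'.letter (List.mem_cons_of_mem _ hx)
            · refine List.isChain_cons.2 ⟨?_, (List.isChain_cons.1 ht'.2).2⟩
              intro y hy
              have := (List.isChain_cons.1 ht'.2).1 y hy
              simpa [hsH] using this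
      · -- merged letter is genuine
        have hsH : z * u ∈ H ↔ u ∈ H := by
          constructor
          · intro hm
            by_contra hun
            have hzn : z ∉ H := fun hzn => hun (hside.1 hzn)
            have : z * u ∈ L := mul_mem (hz.resolve_left hzn) (hu.resolve_left hun)
            exact hmK ⟨hm, this⟩
          · intro hun
            exact mul_mem (hside.2 hun) hun
        refine Or.inr (Or.inr ⟨(z * u) :: t, ⟨?_, ?_⟩, by simpa using hlen, by
          simp [List.prod_cons, mul_assoc]⟩)
        · rintro x hx
          rcases List.mem_cons.1 hx with rfl | hx
          · refine ⟨?_, hmK⟩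
            by_cases hzH : z ∈ H
            · exact Or.inl (mul_mem hzH (hside.1 hzH))
            · exact Or.inr (mul_mem (hz.resolve_left hzH)
                (hu.resolve_left (fun huH => hzH (hside.2 huH))))
          · exact h.letter (List.mem_cons_of_mem _ hx)
        · refine List.isChain_cons.2 ⟨?_, (List.isChain_cons.1 h.2).2⟩
          intro y hy
          have := (List.isChain_cons.1 h.2).1 y hy
          simpa [hsH] using this
    · -- different sides : genuinely prepend
      have hzK' : z ∉ H ⊓ L := hzK
      refine Or.inr (Or.inr ⟨z :: u :: t, ⟨?_, ?_⟩, by simp, by simp [List.prod_cons]⟩)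
      · rintro x hx
        rcases List.mem_cons.1 hx with rfl | hx
        · exact ⟨hz, hzK'⟩
        · exact h.letter hx
      · exact List.isChain_cons_cons.2 ⟨hside, h.2⟩

lemma hasForm_front {z : G} (hz : z ∈ H ∨ z ∈ L) {y : G} (hy : HasForm H L y) :
    HasForm H L (z * y) := by
  rcases hy with hy | hy | ⟨l, hl, hlen, rfl⟩
  · exact hasForm_two_letter hz (Or.inl hy)
  · exact hasForm_two_letter hz (Or.inr hy)
  · match l, hlen with
    | u :: t, hlen => exact hasForm_front_letter hz hl hlen

lemma hasForm_list : ∀ (l : List G), (∀ x ∈ l, x ∈ H ∨ x ∈ L) →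
    ∀ y : G, HasForm H L y → HasForm H L (l.prod * y) := by
  intro l
  induction l with
  | nil => intro _ y hy; simpa using hy
  | cons z t ih =>
    intro hmem y hy
    have h1 : HasForm H L (t.prod * y) := ih (fun x hx => hmem x (List.mem_cons_of_mem _ hx)) y hy
    have h2 : HasForm H L (z * (t.prod * y)) := hasForm_front (hmem z (List.mem_cons_self)) h1
    simpa [List.prod_cons, mul_assoc] using h2

lemma hasForm_inv {y : G} (hy : HasForm H L y) : HasForm H L y⁻¹ := by
  rcases hy with hy | hy | ⟨l, hl, hlen, rfl⟩
  · exact Or.inl (inv_mem hy)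
  · exact Or.inr (Or.inl (inv_mem hy))
  · exact Or.inr (Or.inr ⟨invr l, hl.invr, by simpa [invr] using hlen, invr_prod l⟩)

lemma hasForm_all (hamal : IsAmalgamOf H L) (g : G) : HasForm H L g := by
  have hg : g ∈ Subgroup.closure ((H : Set G) ∪ (L : Set G)) := by
    rw [hamal.1]; trivial
  refine Subgroup.closure_induction (p := fun x _ => HasForm H L x) ?_ ?_ ?_ ?_ hg
  · rintro x (hx | hx)
    · exact Or.inl hx
    · exact Or.inr (Or.inl hx)
  · exact Or.inl (one_mem H)
  · rintro x y _ _ px py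
    rcases px with px | px | ⟨l, hl, hlen, rfl⟩
    · exact hasForm_front (Or.inl px) py
    · exact hasForm_front (Or.inr px) py
    · exact hasForm_list l (fun x hx => (hl.letter hx).1) y py
  · exact fun x _ px => hasForm_inv px

lemma lred_append {l1 l2 : List G} (h1 : Lred H L l1) (h2 : Lred H L l2)
    (hjunc : ∀ x ∈ l1.getLast?, ∀ y ∈ l2.head?, ¬(x ∈ H ↔ y ∈ H)) :
    Lred H L (l1 ++ l2) := by
  refine ⟨?_, List.isChain_append.2 ⟨h1.2, h2.2, hjunc⟩⟩
  intro x hx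
  rcases List.mem_append.1 hx with hx | hx
  · exact h1.letter hx
  · exact h2.letter hx

lemma lred_singleton {x : G} (h1 : x ∈ H ∨ x ∈ L) (h2 : x ∉ H ⊓ L) :
    Lred H L [x] := ⟨by rintro y hy; simp at hy; subst hy; exact ⟨h1, h2⟩, List.isChain_singleton x⟩

/-- Step B : from an element of `A \ (H ⊓ L)` produce an element of `A` which is
the product of a reduced word starting in `H` and ending outside `H`. -/
lemma exists_mixed (hamal : IsAmalgamOf H L) (A : Subgroup G) [hn : A.Normal]
    (hHne : H ⊓ L ≠ H) (hLne : H ⊓ L ≠ L) {a₀ : G} (ha : a₀ ∈ A) (hk : a₀ ∉ H ⊓ L) :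
    ∃ (b e : G) (mid : List G), Lred H L (b :: (mid ++ [e])) ∧ b ∈ H ∧ e ∉ H ∧
      (b :: (mid ++ [e])).prod ∈ A := by
  obtain ⟨h₀, h₀H, h₀K⟩ := SetLike.exists_of_lt (lt_of_le_of_ne inf_le_left hHne)
  obtain ⟨l₀, l₀L, l₀K⟩ := SetLike.exists_of_lt (lt_of_le_of_ne inf_le_right hLne)
  have h₀L : h₀ ∉ L := fun h => h₀K ⟨h₀H, h⟩
  have l₀H : l₀ ∉ H := fun h => l₀K ⟨h, l₀L⟩
  rcases hasForm_all hamal a₀ with hA | hA | ⟨l, hl, hlen, hprod⟩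
  · -- a₀ ∈ H \ K
    have ha₀L : a₀ ∉ L := fun h => hk ⟨hA, h⟩
    have ha₀H : a₀⁻¹ ∈ H := inv_mem hA
    have hinvK : a₀⁻¹ ∉ H ⊓ L := fun h => hk (by simpa using inv_mem h)
    have hinvL : a₀⁻¹ ∉ L := fun h => ha₀L (by simpa using inv_mem h)
    refine ⟨a₀⁻¹, l₀⁻¹, [l₀, a₀⁻¹], ⟨?_, ?_⟩, ha₀H, fun h => l₀H (by simpa using inv_mem h), ?_⟩
    · rintro x hx
      simp only [List.cons_append, List.mem_cons, List.not_mem_nil] at hx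
      rcases hx with rfl | rfl | rfl | hx
      · exact ⟨Or.inl ha₀H, hinvK⟩
      · exact ⟨Or.inr l₀L, l₀K⟩
      · exact ⟨Or.inl ha₀H, hinvK⟩
      · have : x = l₀⁻¹ := by simpa using hx
        subst this
        exact ⟨Or.inr (inv_mem l₀L), fun h => l₀K (by simpa using inv_mem h)⟩
    · refine List.isChain_cons_cons.2 ⟨?_, List.isChain_cons_cons.2 ⟨?_, List.isChain_cons_cons.2 ⟨?_, ?_⟩⟩⟩
      · exact fun h => l₀H (h.1 ha₀H)
      · exact fun h => l₀H (by simpa using h.2 ha₀H)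
      · exact fun h => l₀H (by simpa using inv_mem (h.1 ha₀H))
      · simp
    · have : (a₀⁻¹ :: ([l₀, a₀⁻¹] ++ [l₀⁻¹])).prod = a₀⁻¹ * (l₀ * a₀⁻¹ * l₀⁻¹) := by
        simp [List.prod_cons, mul_assoc]
      rw [this]
      exact mul_mem (inv_mem ha) (hn.conj_mem _ (inv_mem ha) l₀)
  · -- a₀ ∈ L \ K
    have ha₀H : a₀ ∉ H := fun h => hk ⟨h, hA⟩
    refine ⟨h₀, a₀, [a₀, h₀⁻¹], ⟨?_, ?_⟩, h₀H, ha₀H, ?_⟩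
    · rintro x hx
      simp only [List.cons_append, List.mem_cons, List.not_mem_nil] at hx
      rcases hx with rfl | rfl | rfl | hx
      · exact ⟨Or.inl h₀H, h₀K⟩
      · exact ⟨Or.inr hA, hk⟩
      · exact ⟨Or.inl (inv_mem h₀H), fun h => h₀K (by simpa using inv_mem h)⟩
      · have : x = a₀ := by simpa using hx
        subst this
        exact ⟨Or.inr hA, hk⟩
    · refine List.isChain_cons_cons.2 ⟨?_, List.isChain_cons_cons.2 ⟨?_, List.isChain_cons_cons.2 ⟨?_, ?_⟩⟩⟩
      · exact fun h => ha₀H (h.1 h₀H)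
      · exact fun h => ha₀H (h.2 (inv_mem h₀H))
      · exact fun h => ha₀H (h.1 (inv_mem h₀H))
      · simp
    · have : (h₀ :: ([a₀, h₀⁻¹] ++ [a₀])).prod = h₀ * a₀ * h₀⁻¹ * a₀ := by
        simp [List.prod_cons, mul_assoc]
      rw [this]
      exact mul_mem (hn.conj_mem _ ha h₀) ha
  · -- a₀ has a genuine reduced form
    subst hprod
    match l, hlen with
    | u :: t, hlen =>
    have htne : t ≠ [] := by intro h; subst h; simp at hlen
    obtain ⟨mid, e, rfl⟩ : ∃ mid e, t = mid ++ [e] :=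
      ⟨t.dropLast, t.getLast htne, (List.dropLast_append_getLast htne).symm⟩
    obtain ⟨⟨hu, huK⟩, ⟨he, heK⟩⟩ :
        ((u ∈ H ∨ u ∈ L) ∧ u ∉ H ⊓ L) ∧ ((e ∈ H ∨ e ∈ L) ∧ e ∉ H ⊓ L) :=
      ⟨hl.letter (by simp), hl.letter (by simp)⟩
    have hlast : (u :: (mid ++ [e])).getLast? = some e := by
      rw [show u :: (mid ++ [e]) = (u :: mid) ++ [e] by simp]
      exact List.getLast?_concat
    by_cases huH : u ∈ H <;> by_cases heH : e ∈ H
    · -- type H ... H : conjugate by l₀ and multiply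
      have hinner : Lred H L ((u :: (mid ++ [e])) ++ [l₀⁻¹]) := by
        refine lred_append hl (lred_singleton (Or.inr (inv_mem l₀L))
          (fun h => l₀K (by simpa using inv_mem h))) ?_
        rw [hlast]
        rintro x hx y hy
        simp only [Option.mem_some_iff, List.head?_cons] at hx hy
        subst hx; subst hy
        exact fun hiff => l₀H (by simpa using inv_mem (hiff.1 heH))
      have hmid : Lred H L (l₀ :: ((u :: (mid ++ [e])) ++ [l₀⁻¹])) := by
        refine ⟨?_, List.isChain_cons.2 ⟨?_, hinner.2⟩⟩
        · rintro x hx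
          rcases List.mem_cons.1 hx with rfl | hx
          · exact ⟨Or.inr l₀L, l₀K⟩
          · exact hinner.letter hx
        · rintro y hy
          simp only [List.cons_append, List.head?_cons, Option.mem_some_iff] at hy
          subst hy
          exact fun hiff => l₀H (hiff.2 huH)
      have hfull : Lred H L ((u :: (mid ++ [e])) ++ (l₀ :: ((u :: (mid ++ [e])) ++ [l₀⁻¹]))) := by
        refine lred_append hl hmid ?_
        rw [hlast]
        rintro x hx y hy
        simp only [Option.mem_some_iff, List.head?_cons] at hx hy
        subst hx; subst hy
        exact fun hiff => l₀H (hiff.1 heH)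
      refine ⟨u, l₀⁻¹, (mid ++ [e]) ++ l₀ :: (u :: (mid ++ [e])), ?_, huH,
        fun h => l₀H (by simpa using inv_mem h), ?_⟩
      · have heq : u :: (((mid ++ [e]) ++ l₀ :: (u :: (mid ++ [e]))) ++ [l₀⁻¹])
            = (u :: (mid ++ [e])) ++ (l₀ :: ((u :: (mid ++ [e])) ++ [l₀⁻¹])) := by simp
        rw [heq]
        exact hfull
      · have : (u :: (((mid ++ [e]) ++ l₀ :: (u :: (mid ++ [e]))) ++ [l₀⁻¹])).prod
            = (u :: (mid ++ [e])).prod * (l₀ * (u :: (mid ++ [e])).prod * l₀⁻¹) := by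
          simp [List.prod_cons, List.prod_append, mul_assoc]
        rw [this]
        exact mul_mem ha (hn.conj_mem _ ha l₀)
    · -- type H ... L : already good
      exact ⟨u, e, mid, hl, huH, heH, ha⟩
    · -- type L ... H : invert
      refine ⟨e⁻¹, u⁻¹, invr mid, ?_, inv_mem heH, fun h => huH (by simpa using inv_mem h), ?_⟩
      · rw [← invr_concat]
        exact hl.invr
      · rw [← invr_concat, invr_prod]
        exact inv_mem ha
    · -- type L ... L : conjugate by h₀ and multiply
      have hinner : Lred H L (h₀⁻¹ :: (u :: (mid ++ [e]))) := by
        refine ⟨?_, List.isChain_cons_cons.2 ⟨?_, hl.2⟩⟩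
        · rintro x hx
          rcases List.mem_cons.1 hx with rfl | hx
          · exact ⟨Or.inl (inv_mem h₀H), fun h => h₀K (by simpa using inv_mem h)⟩
          · exact hl.letter hx
        · exact fun hiff => huH (hiff.1 (inv_mem h₀H))
      have hfull : Lred H L (h₀ :: ((u :: (mid ++ [e])) ++ (h₀⁻¹ :: (u :: (mid ++ [e]))))) := by
        refine ⟨?_, List.isChain_cons_cons.2 ⟨?_, ?_⟩⟩
        · rintro x hx
          rcases List.mem_cons.1 hx with rfl | hx
          · exact ⟨Or.inl h₀H, h₀K⟩
          · rcases List.mem_append.1 hx with hx | hx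
            · exact hl.letter hx
            · exact hinner.letter hx
        · exact fun hiff => huH (hiff.1 h₀H)
        · refine List.isChain_append.2 ⟨hl.2, hinner.2, ?_⟩
          rw [hlast]
          rintro x hx y hy
          simp only [Option.mem_some_iff, List.head?_cons] at hx hy
          subst hx; subst hy
          exact fun hiff => heH (hiff.2 (inv_mem h₀H))
      refine ⟨h₀, e, (u :: (mid ++ [e])) ++ (h₀⁻¹ :: (u :: mid)), ?_, h₀H, heH, ?_⟩
      · have heq : h₀ :: (((u :: (mid ++ [e])) ++ (h₀⁻¹ :: (u :: mid))) ++ [e])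
            = h₀ :: ((u :: (mid ++ [e])) ++ (h₀⁻¹ :: (u :: (mid ++ [e])))) := by simp
        rw [heq]
        exact hfull
      · have : (h₀ :: (((u :: (mid ++ [e])) ++ (h₀⁻¹ :: (u :: mid))) ++ [e])).prod
            = h₀ * (u :: (mid ++ [e])).prod * h₀⁻¹ * (u :: (mid ++ [e])).prod := by
          simp [List.prod_cons, List.prod_append, mul_assoc]
        rw [this]
        exact mul_mem (hn.conj_mem _ ha h₀) ha

/-- Step C : if `[H : H ⊓ L] ≠ 2` we can pick `h ∈ H` outside `K ∪ bK`. -/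
lemma exists_far (hrel : (H ⊓ L).relIndex H ≠ 2) {b : G} (hb : b ∈ H) (hbK : b ∉ H ⊓ L) :
    ∃ h, h ∈ H ∧ h ∉ H ⊓ L ∧ b⁻¹ * h ∉ H ⊓ L := by
  by_contra hcon
  push_neg at hcon
  apply hrel
  show ((H ⊓ L).subgroupOf H).index = 2
  rw [Subgroup.index_eq_two_iff]
  refine ⟨⟨b, hb⟩, fun c => ?_⟩
  by_cases hc : (c : G) ∈ H ⊓ L
  · refine Or.inr ⟨Subgroup.mem_subgroupOf.2 hc, fun hP => ?_⟩
    have hcb : (c : G) * b ∈ H ⊓ L := Subgroup.mem_subgroupOf.1 hP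
    have : b ∈ H ⊓ L := by
      have := mul_mem (inv_mem hc) hcb
      simpa [mul_assoc] using this
    exact hbK this
  · refine Or.inl ⟨?_, fun hQ => hc (Subgroup.mem_subgroupOf.1 hQ)⟩
    have hcinv := hcon (c : G)⁻¹ (inv_mem c.2)
    have hcinvK : (c : G)⁻¹ ∉ H ⊓ L := fun hK => hc (by simpa using inv_mem hK)
    have hbc : b⁻¹ * (c : G)⁻¹ ∈ H ⊓ L := hcinv hcinvK
    have : (c : G) * b ∈ H ⊓ L := by
      have := inv_mem hbc
      simpa using this
    exact Subgroup.mem_subgroupOf.2 this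

/-- The core theorem : a normal subgroup not contained in `H ⊓ L` of a
nontrivial amalgam with `[H : H ⊓ L] ≠ 2` contains a free group of rank 2. -/
theorem core_free {A : Subgroup G} [hn : A.Normal] (hamal : IsAmalgamOf H L)
    (hHne : H ⊓ L ≠ H) (hLne : H ⊓ L ≠ L) (hrel : (H ⊓ L).relIndex H ≠ 2)
    {a₀ : G} (ha : a₀ ∈ A) (hk : a₀ ∉ H ⊓ L) :
    ∃ f : FreeGroup (Fin 2) →* G, Function.Injective f ∧ f.range ≤ A := by
  classical
  obtain ⟨b, e, mid, hB, hbH, heH, haA⟩ := exists_mixed hamal A hHne hLne ha hk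
  have hbK : b ∉ H ⊓ L := (hB.letter (by simp)).2
  have heK : e ∉ H ⊓ L := (hB.letter (by simp)).2
  have heL : e ∈ L := hB.mem_L (by simp) heH
  obtain ⟨h, hhH, hhK, hbh⟩ := exists_far hrel hbH hbK
  obtain ⟨l₀, l₀L, l₀K⟩ := SetLike.exists_of_lt (lt_of_le_of_ne inf_le_right hLne)
  have hhL : h ∉ L := fun hh => hhK ⟨hhH, hh⟩
  have l₀H : l₀ ∉ H := fun hh => l₀K ⟨hh, l₀L⟩
  set xa : G := (b :: (mid ++ [e])).prod with hxa
  set c : G := h * (l₀ * (h⁻¹ * 1)) with hc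
  -- the three shape predicates
  set F1 : G → Prop := fun g => ∃ t, Lred H L (b :: t) ∧ (b :: t).prod = g with hF1
  set F2 : G → Prop := fun g => ∃ t, Lred H L (e⁻¹ :: t) ∧ (e⁻¹ :: t).prod = g with hF2
  set Fh : G → Prop := fun g => ∃ t, Lred H L (h :: t) ∧ (h :: t).prod = g with hFh
  -- blocks
  have hXi : Lred H L (e⁻¹ :: (invr mid ++ [b⁻¹])) := by
    rw [← invr_concat]; exact hB.invr
  have hXiprod : (e⁻¹ :: (invr mid ++ [b⁻¹])).prod = xa⁻¹ := by
    rw [← invr_concat, invr_prod]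
  have hcB : Lred H L (h :: ([l₀] ++ [h⁻¹])) := by
    refine ⟨?_, ?_⟩
    · rintro x hx
      rcases List.mem_cons.1 hx with rfl | hx
      · exact ⟨Or.inl hhH, hhK⟩
      · rcases List.mem_cons.1 hx with rfl | hx
        · exact ⟨Or.inr l₀L, l₀K⟩
        · have : x = h⁻¹ := by simpa using hx
          subst this
          exact ⟨Or.inl (inv_mem hhH), fun hK => hhK (by simpa using inv_mem hK)⟩
    · refine List.isChain_cons_cons.2 ⟨fun hiff => l₀H (hiff.1 hhH), List.isChain_cons_cons.2 ⟨?_, by simp⟩⟩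
      exact fun hiff => l₀H (hiff.2 (inv_mem hhH))
  have hcBprod : (h :: ([l₀] ++ [h⁻¹])).prod = c := by simp [hc, List.prod_cons]
  have hcI : Lred H L (h :: ([l₀⁻¹] ++ [h⁻¹])) := by
    refine ⟨?_, ?_⟩
    · rintro x hx
      rcases List.mem_cons.1 hx with rfl | hx
      · exact ⟨Or.inl hhH, hhK⟩
      · rcases List.mem_cons.1 hx with rfl | hx
        · exact ⟨Or.inr (inv_mem l₀L), fun hK => l₀K (by simpa using inv_mem hK)⟩
        · have : x = h⁻¹ := by simpa using hx
          subst this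
          exact ⟨Or.inl (inv_mem hhH), fun hK => hhK (by simpa using inv_mem hK)⟩
    · refine List.isChain_cons_cons.2 ⟨?_, List.isChain_cons_cons.2 ⟨?_, by simp⟩⟩
      · exact fun hiff => l₀H (by simpa using inv_mem (hiff.1 hhH))
      · exact fun hiff => l₀H (by simpa using inv_mem (hiff.2 (inv_mem hhH)))
  have hcIprod : (h :: ([l₀⁻¹] ++ [h⁻¹])).prod = c⁻¹ := by
    simp [hc, List.prod_cons, mul_assoc]
  -- junction facts
  have jeb : ¬(e ∈ H ↔ b ∈ H) := fun hiff => heH (hiff.2 hbH)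
  have jeh : ¬(e ∈ H ↔ h ∈ H) := fun hiff => heH (hiff.2 hhH)
  have jbe : ¬(b⁻¹ ∈ H ↔ e⁻¹ ∈ H) := fun hiff => heH (by simpa using inv_mem (hiff.1 (inv_mem hbH)))
  have jbh : (b⁻¹ ∈ H ↔ h ∈ H) ∧ b⁻¹ * h ∉ H ⊓ L := ⟨by simp [inv_mem_iff, hbH, hhH], hbh⟩
  have jhb : (h⁻¹ ∈ H ↔ b ∈ H) ∧ h⁻¹ * b ∉ H ⊓ L := by
    refine ⟨by simp [inv_mem_iff, hbH, hhH], fun hK => hbh ?_⟩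
    have := inv_mem hK
    simpa using this
  have jhe : ¬(h⁻¹ ∈ H ↔ e⁻¹ ∈ H) :=
    fun hiff => heH (by simpa using inv_mem (hiff.1 (inv_mem hhH)))
  -- the step lemmas
  have S1 : ∀ g, F1 g → F1 (xa * g) := by
    rintro g ⟨t, ht, rfl⟩
    obtain ⟨t', h1, h2⟩ := prepend hB ht (Or.inl jeb)
    exact ⟨t', h1, h2⟩
  have S2 : ∀ g, Fh g → F1 (xa * g) := by
    rintro g ⟨t, ht, rfl⟩
    obtain ⟨t', h1, h2⟩ := prepend hB ht (Or.inl jeh)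
    exact ⟨t', h1, h2⟩
  have S3 : ∀ g, F2 g → F2 (xa⁻¹ * g) := by
    rintro g ⟨t, ht, rfl⟩
    obtain ⟨t', h1, h2⟩ := prepend hXi ht (Or.inl jbe)
    exact ⟨t', h1, by rw [h2, hXiprod]⟩
  have S4 : ∀ g, Fh g → F2 (xa⁻¹ * g) := by
    rintro g ⟨t, ht, rfl⟩
    obtain ⟨t', h1, h2⟩ := prepend hXi ht (Or.inr ⟨jbh.1, jbh.2⟩)
    exact ⟨t', h1, by rw [h2, hXiprod]⟩
  have S5 : ∀ g, F1 g → Fh (c * g) := by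
    rintro g ⟨t, ht, rfl⟩
    obtain ⟨t', h1, h2⟩ := prepend hcB ht (Or.inr ⟨jhb.1, jhb.2⟩)
    exact ⟨t', h1, by rw [h2, hcBprod]⟩
  have S6 : ∀ g, F2 g → Fh (c * g) := by
    rintro g ⟨t, ht, rfl⟩
    obtain ⟨t', h1, h2⟩ := prepend hcB ht (Or.inl jhe)
    exact ⟨t', h1, by rw [h2, hcBprod]⟩
  have S7 : ∀ g, F1 g → Fh (c⁻¹ * g) := by
    rintro g ⟨t, ht, rfl⟩
    obtain ⟨t', h1, h2⟩ := prepend hcI ht (Or.inr ⟨jhb.1, jhb.2⟩)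
    exact ⟨t', h1, by rw [h2, hcIprod]⟩
  have S8 : ∀ g, F2 g → Fh (c⁻¹ * g) := by
    rintro g ⟨t, ht, rfl⟩
    obtain ⟨t', h1, h2⟩ := prepend hcI ht (Or.inl jhe)
    exact ⟨t', h1, by rw [h2, hcIprod]⟩
  have A1 : F1 xa := ⟨mid ++ [e], hB, rfl⟩
  have A2 : F2 xa⁻¹ := ⟨invr mid ++ [b⁻¹], hXi, hXiprod⟩
  have A3 : Fh c⁻¹ := ⟨[l₀⁻¹] ++ [h⁻¹], hcI, hcIprod⟩
  have N1 : ∀ g, F1 g → g ≠ 1 := by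
    rintro g ⟨t, ht, rfl⟩
    exact lred_prod_ne_one hamal ht (by simp)
  have N2 : ∀ g, F2 g → g ≠ 1 := by
    rintro g ⟨t, ht, rfl⟩
    exact lred_prod_ne_one hamal ht (by simp)
  have NH : ∀ g, Fh g → g ≠ 1 := by
    rintro g ⟨t, ht, rfl⟩
    exact lred_prod_ne_one hamal ht (by simp)
  -- the free subgroup
  refine ⟨FreeGroup.lift (phiGen xa c), ?_, ?_⟩
  · rw [injective_iff_map_eq_one]
    intro w hw
    by_contra hne
    have htw : w.toWord ≠ [] := fun hnil => hne (FreeGroup.toWord_eq_nil_iff.1 hnil)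
    obtain ⟨p, ww, hpw⟩ : ∃ p ww, w.toWord = p :: ww := by
      rcases hlw : w.toWord with - | ⟨p, ww⟩
      · exact absurd hlw htw
      · exact ⟨p, ww, rfl⟩
    have hchain := chain'_of_reduce (FreeGroup.reduce_toWord w)
    rw [hpw] at hchain
    have hfval : FreeGroup.lift (phiGen xa c) w
        = ((p :: ww).map (phiLetter xa c)).prod := by
      conv_lhs => rw [← FreeGroup.mk_toWord (x := w), hpw]
      rw [FreeGroup.lift_mk]
      rfl
    have hPP := pingpong_aux A1 A2 A3 S1 S2 S3 S4 S5 S6 S7 S8 ww p hchain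
    rw [← hfval, hw] at hPP
    obtain ⟨i, s⟩ := p
    fin_cases i <;> cases s <;> simp [PP] at hPP
    · exact N2 _ hPP rfl
    · exact N1 _ hPP rfl
    · have := S6 _ hPP
      simp at this
      exact NH _ this rfl
    · have := S5 _ hPP
      simp at this
      exact NH _ this rfl
  · apply FreeGroup.range_lift_le
    rintro x ⟨i, rfl⟩
    fin_cases i
    · simpa [phiGen] using haA
    · simpa [phiGen] using hn.conj_mem _ haA c

lemma isAmalgamOf_comm (hamal : IsAmalgamOf H L) : IsAmalgamOf L H := by
  constructor
  · rw [Set.union_comm]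
    exact hamal.1
  · intro n g side hcond halt
    refine hamal.2 n g (fun i => !(side i)) ?_ ?_
    · intro i
      have hco := (hcond i).1
      refine ⟨?_, fun hK => (hcond i).2 ⟨hK.2, hK.1⟩⟩
      cases hsi : side i <;>
        simp only [hsi, Bool.not_false, Bool.not_true, cond_true, cond_false] at hco ⊢ <;>
        exact hco
    · intro i hEq
      apply halt i
      cases hc : side i.castSucc <;> cases hs : side i.succ <;> simp_all

lemma lred_ofFn {n : ℕ} {g : Fin (n + 2) → G} {side : Fin (n + 2) → Bool}
    (h1 : ∀ i, g i ∈ (cond (side i) H L) ∧ g i ∉ H ⊓ L)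
    (h2 : ∀ i : Fin (n + 1), side i.castSucc ≠ side i.succ) :
    Lred H L (List.ofFn g) := by
  have hmemH : ∀ j, (g j ∈ H ↔ side j = true) := by
    intro j
    constructor
    · intro hj
      by_contra hsj
      have hsj' : side j = false := by simpa using hsj
      have := (h1 j).1
      rw [hsj'] at this
      exact (h1 j).2 ⟨hj, this⟩
    · intro hsj
      have := (h1 j).1
      rwa [hsj] at this
  constructor
  · intro x hx
    obtain ⟨i, rfl⟩ := List.mem_ofFn.1 hx
    refine ⟨?_, (h1 i).2⟩
    have := (h1 i).1
    cases hsi : side i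
    · rw [hsi] at this; exact Or.inr this
    · rw [hsi] at this; exact Or.inl this
  · rw [List.Chain', List.isChain_iff_getElem]
    intro i hi
    have hi' : i < n + 1 := by simpa using hi
    have hgc : (List.ofFn g).get ⟨i, by simp; omega⟩ = g ⟨i, by omega⟩ := by
      rw [List.get_ofFn]; rfl
    have hgs : (List.ofFn g).get ⟨i + 1, by simp; omega⟩ = g ⟨i + 1, by omega⟩ := by
      rw [List.get_ofFn]; rfl
    simp only [List.get_eq_getElem] at hgc hgs
    rw [hgc, hgs]
    intro hiff
    have halt := h2 ⟨i, hi'⟩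
    apply halt
    have e1 : (⟨i, hi'⟩ : Fin (n + 1)).castSucc = ⟨i, by omega⟩ := rfl
    have e2 : (⟨i, hi'⟩ : Fin (n + 1)).succ = ⟨i + 1, by omega⟩ := rfl
    rw [e1, e2]
    rw [hmemH, hmemH] at hiff
    cases hs : side ⟨i, by omega⟩
    · cases hs' : side ⟨i + 1, by omega⟩
      · rfl
      · rw [hs, hs'] at hiff; simp at hiff
    · cases hs' : side ⟨i + 1, by omega⟩
      · rw [hs, hs'] at hiff; simp at hiff
      · rfl

end AmalgamAux

/-- **Amalgam splittings descend along kernels without free subgroups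
(Cornulier, Prop. 7).** Let `1 → A → G → B → 1` be exact with `A` containing
no nonabelian free subgroup. If `G = H ∗_K L` is a nontrivial non-degenerate
amalgam (`K ≠ H`, `K ≠ L`, and not both indices `[H:K]`, `[L:K]` equal 2),
then `A ≤ K`, and `B ≅ G/A` splits as the nontrivial amalgam
`(H/A) ∗_{K/A} (L/A)`. -/
theorem amalgam_descends_mod_no_free_kernel
    {G : Type*} [Group G] (A H L : Subgroup G) [A.Normal]
    (hAfree : ¬ ∃ f : FreeGroup (Fin 2) →* G, Function.Injective f ∧ f.range ≤ A)
    (hamal : IsAmalgamOf H L)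
    (hH : H ⊓ L ≠ H) (hL : H ⊓ L ≠ L)
    (hnd : ¬ ((H ⊓ L).relIndex H = 2 ∧ (H ⊓ L).relIndex L = 2)) :
    A ≤ H ⊓ L ∧
    IsAmalgamOf (Subgroup.map (QuotientGroup.mk' A) H)
      (Subgroup.map (QuotientGroup.mk' A) L) ∧
    Subgroup.map (QuotientGroup.mk' A) H ⊓ Subgroup.map (QuotientGroup.mk' A) L
      ≠ Subgroup.map (QuotientGroup.mk' A) H ∧
    Subgroup.map (QuotientGroup.mk' A) H ⊓ Subgroup.map (QuotientGroup.mk' A) L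
      ≠ Subgroup.map (QuotientGroup.mk' A) L := by
  classical
  -- Part 1 : A ≤ H ⊓ L
  have hAK : A ≤ H ⊓ L := by
    intro a₀ ha
    by_contra hk
    have hcases : (H ⊓ L).relIndex H ≠ 2 ∨ (H ⊓ L).relIndex L ≠ 2 := by tauto
    rcases hcases with hr | hr
    · exact hAfree (AmalgamAux.core_free hamal hH hL hr ha hk)
    · refine hAfree (AmalgamAux.core_free (A := A) (H := L) (L := H) (AmalgamAux.isAmalgamOf_comm hamal)
        (by rwa [inf_comm]) (by rwa [inf_comm]) (by rwa [inf_comm]) ha (by rwa [inf_comm]))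
  set π := QuotientGroup.mk' A with hπ
  have hsurj : Function.Surjective π := QuotientGroup.mk'_surjective A
  refine ⟨hAK, ⟨?_, ?_⟩, ?_⟩
  · -- closure condition in the quotient
    have : ((Subgroup.map π H : Set (G ⧸ A)) ∪ (Subgroup.map π L : Set (G ⧸ A)))
        = π '' ((H : Set G) ∪ (L : Set G)) := by
      rw [Set.image_union]
      simp [Subgroup.coe_map]
    rw [this, ← MonoidHom.map_closure, hamal.1]
    exact Subgroup.map_top_of_surjective π hsurj
  · -- reduced words in the quotient
    intro n gq side hcond halt hprod
    have hlift : ∀ i, ∃ x, x ∈ (cond (side i) H L) ∧ π x = gq i := by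
      intro i
      have := (hcond i).1
      cases hsi : side i
      · rw [hsi] at this
        simp only [cond_false] at this ⊢
        exact Subgroup.mem_map.1 this
      · rw [hsi] at this
        simp only [cond_true] at this ⊢
        exact Subgroup.mem_map.1 this
    choose g hg hgπ using hlift
    have hgK : ∀ i, g i ∉ H ⊓ L := by
      intro i hK
      exact (hcond i).2 ⟨⟨g i, hK.1, hgπ i⟩, ⟨g i, hK.2, hgπ i⟩⟩
    have hlred : AmalgamAux.Lred H L (List.ofFn g) := AmalgamAux.lred_ofFn (fun i => ⟨hg i, hgK i⟩) halt
    have hπprod : π (List.ofFn g).prod = 1 := by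
      rw [map_list_prod, List.map_ofFn]
      rw [show π ∘ g = gq from funext hgπ]
      exact hprod
    have hmem : (List.ofFn g).prod ∈ A := by
      rw [← QuotientGroup.ker_mk' A]
      exact hπprod
    exact AmalgamAux.lred_prod_notin hamal hlred (by simp) (hAK hmem)
  · -- nontriviality in the quotient
    have hinf : Subgroup.map π H ⊓ Subgroup.map π L = Subgroup.map π (H ⊓ L) := by
      refine le_antisymm ?_ (le_inf (Subgroup.map_mono inf_le_left)
        (Subgroup.map_mono inf_le_right))
      rintro x ⟨hx1, hx2⟩
      obtain ⟨y, hyH, rfl⟩ := Subgroup.mem_map.1 hx1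
      obtain ⟨z, hzL, hzπ⟩ := Subgroup.mem_map.1 hx2
      have : ∃ w ∈ A, z * w = y := (QuotientGroup.mk'_eq_mk' A).1 hzπ
      obtain ⟨w, hwA, rfl⟩ := this
      have hyL : z * w ∈ L := mul_mem hzL ((hAK hwA).2)
      exact ⟨z * w, ⟨hyH, hyL⟩, rfl⟩
    have hcomap : ∀ S : Subgroup G, A ≤ S → Subgroup.comap π (Subgroup.map π S) = S := by
      intro S hAS
      rw [Subgroup.comap_map_eq]
      rw [QuotientGroup.ker_mk' A]
      exact sup_eq_left.2 hAS
    constructor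
    · intro heq
      rw [hinf] at heq
      apply hH
      have := congrArg (Subgroup.comap π) heq
      rwa [hcomap _ hAK, hcomap _ (hAK.trans inf_le_left)] at this
    · intro heq
      rw [hinf] at heq
      apply hL
      have := congrArg (Subgroup.comap π) heq
      rwa [hcomap _ hAK, hcomap _ (hAK.trans inf_le_right)] at this
end
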